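/- arXiv:1410.4785 — 3 statements merged into one kernel-verified Lean document; each statement's English description precedes it below -/
import Mathlib

section
/- Let m ≥ 4 and ε ∈ 𝔽₂. For a subset S ⊆ V^ε with characteristic vector χ_S ∈ 𝔽₂^{V^ε}, put v := Σ_{w∈S} w ∈ 𝔽₂^{2m}. Then the minimum Hamming distance from χ_S to a codeword of C^ε equals: 0 if |S| is even and v = 0; 1 if |S| is odd and θ₀(v) = ε; 2 if |S| is even and v ≠ 0; and 3 if |S| is odd and θ₀(v) = 1 + ε. In particular, every vector of 𝔽₂^{V^ε} is within Hamming distance 3 of C^ε and some vector is at distance exactly 3, i.e. C^ε has covering radius 3. -/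
open Matrix
open scoped symmDiff

/-- Row vectors in `𝔽₂^{2m}`, with coordinates indexed by `Fin m ⊕ Fin m`
(the first block and the second block of `m` coordinates). -/
abbrev Vm (m : ℕ) := (Fin m ⊕ Fin m) → ZMod 2

/-- The block matrix `e = (0 Iₘ; 0 0)`. -/
def eMat (m : ℕ) : Matrix (Fin m ⊕ Fin m) (Fin m ⊕ Fin m) (ZMod 2) :=
  Matrix.fromBlocks 0 1 0 0

/-- The block matrix `f = e + eᵀ = (0 Iₘ; Iₘ 0)`. -/
def fMat (m : ℕ) : Matrix (Fin m ⊕ Fin m) (Fin m ⊕ Fin m) (ZMod 2) :=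
  eMat m + (eMat m)ᵀ

/-- The alternating bilinear form `φ(u,v) = u f vᵀ`. -/
def phi (m : ℕ) (u v : Vm m) : ZMod 2 := u ⬝ᵥ (fMat m).mulVec v

/-- The quadratic form `θ₀(u) = u e uᵀ`. -/
def theta0 (m : ℕ) (u : Vm m) : ZMod 2 := u ⬝ᵥ (eMat m).mulVec u

/-- The quadratic form `θ_a(u) = θ₀(u) + φ(u,a)`. -/
def theta (m : ℕ) (a u : Vm m) : ZMod 2 := theta0 m u + phi m u a

/-- The transvection `t_c : u ↦ u + φ(u,c)·c`. -/
def tvec (m : ℕ) (c u : Vm m) : Vm m := u + phi m u c • c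

/-- The point set `V^ε = {v : θ₀(v) = ε}` as a subtype. -/
abbrev Veps (m : ℕ) (ε : ZMod 2) := {v : Vm m // theta0 m v = ε}

/-- The characteristic vector of a finite set. -/
def chi {α : Type*} [DecidableEq α] (S : Finset α) : α → ZMod 2 :=
  fun x => if x ∈ S then 1 else 0

/-- The code `C^ε`: the `𝔽₂`-span of the characteristic vectors of
4-element subsets of `V^ε` summing to zero. -/
def Ceps (m : ℕ) (ε : ZMod 2) : Submodule (ZMod 2) (Veps m ε → ZMod 2) :=
  Submodule.span (ZMod 2)
    {w | ∃ S : Finset (Veps m ε), S.card = 4 ∧ (∑ x ∈ S, (x : Vm m)) = 0 ∧ w = chi S}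

/-- The code `C^a`: the `𝔽₂`-span of the characteristic vectors of
4-element subsets of `V` summing to zero whose `θ₀`-values sum to zero. -/
def Ca (m : ℕ) : Submodule (ZMod 2) (Vm m → ZMod 2) :=
  Submodule.span (ZMod 2)
    {w | ∃ T : Finset (Vm m), T.card = 4 ∧ (∑ x ∈ T, x) = 0 ∧
         (∑ x ∈ T, theta0 m x) = 0 ∧ w = chi T}

lemma eMat_mulVec (m : ℕ) (u : Vm m) : (eMat m).mulVec u = Sum.elim (u ∘ Sum.inr) 0 := by
  have h : u = Sum.elim (u ∘ Sum.inl) (u ∘ Sum.inr) := (Sum.elim_comp_inl_inr u).symm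
  rw [eMat, h, Matrix.fromBlocks_mulVec]
  simp

lemma fMat_mulVec (m : ℕ) (u : Vm m) : (fMat m).mulVec u = Sum.elim (u ∘ Sum.inr) (u ∘ Sum.inl) := by
  have h : u = Sum.elim (u ∘ Sum.inl) (u ∘ Sum.inr) := (Sum.elim_comp_inl_inr u).symm
  rw [fMat, eMat, Matrix.fromBlocks_transpose, Matrix.fromBlocks_add, h, Matrix.fromBlocks_mulVec]
  simp

lemma theta0_apply (m : ℕ) (u : Vm m) : theta0 m u = ∑ i, u (Sum.inl i) * u (Sum.inr i) := by
  rw [theta0, eMat_mulVec, dotProduct, Fintype.sum_sum_type]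
  simp

lemma phi_apply (m : ℕ) (u v : Vm m) :
    phi m u v = (∑ i, u (Sum.inl i) * v (Sum.inr i)) + ∑ i, u (Sum.inr i) * v (Sum.inl i) := by
  rw [phi, fMat_mulVec, dotProduct, Fintype.sum_sum_type]
  simp

-- char two helpers
lemma z2_add_self (a : ZMod 2) : a + a = 0 := by revert a; decide
lemma vm_add_self {m : ℕ} (u : Vm m) : u + u = 0 := by
  funext i; exact z2_add_self (u i)
lemma z2_cases (a : ZMod 2) : a = 0 ∨ a = 1 := by revert a; decide

lemma phi_comm (m : ℕ) (u v : Vm m) : phi m u v = phi m v u := by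
  rw [phi_apply, phi_apply, add_comm]
  congr 1 <;> exact Finset.sum_congr rfl (fun i _ => mul_comm _ _)

lemma phi_add_left (m : ℕ) (u u' v : Vm m) : phi m (u + u') v = phi m u v + phi m u' v := by
  simp only [phi_apply, Pi.add_apply, add_mul]
  rw [Finset.sum_add_distrib, Finset.sum_add_distrib]; ring

lemma phi_add_right (m : ℕ) (u v v' : Vm m) : phi m u (v + v') = phi m u v + phi m u v' := by
  rw [phi_comm, phi_add_left, phi_comm m v u, phi_comm m v' u]

lemma phi_smul_left (m : ℕ) (c : ZMod 2) (u v : Vm m) : phi m (c • u) v = c * phi m u v := by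
  simp only [phi_apply, Pi.smul_apply, smul_eq_mul, mul_assoc]
  rw [mul_add, Finset.mul_sum, Finset.mul_sum]

lemma phi_self (m : ℕ) (u : Vm m) : phi m u u = 0 := by
  rw [phi_apply]
  have : ∀ i ∈ Finset.univ, u (Sum.inr i) * u (Sum.inl i) = u (Sum.inl i) * u (Sum.inr i) :=
    fun i _ => mul_comm _ _
  rw [Finset.sum_congr rfl this]
  exact z2_add_self _

lemma theta0_add (m : ℕ) (u v : Vm m) :
    theta0 m (u + v) = theta0 m u + theta0 m v + phi m u v := by
  simp only [theta0_apply, phi_apply, Pi.add_apply]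
  rw [← Finset.sum_add_distrib, ← Finset.sum_add_distrib, ← Finset.sum_add_distrib]
  exact Finset.sum_congr rfl (fun i _ => by ring)

lemma theta0_zero (m : ℕ) : theta0 m 0 = 0 := by simp [theta0_apply]

-- nondegeneracy
lemma exists_phi_one {m : ℕ} {w : Vm m} (hw : w ≠ 0) : ∃ x : Vm m, phi m x w = 1 := by
  have : ∃ j, w j ≠ 0 := by
    by_contra h
    push_neg at h
    exact hw (funext fun j => h j)
  obtain ⟨j, hj⟩ := this
  have hj1 : w j = 1 := by rcases z2_cases (w j) with h | h; exact absurd h hj; exact h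
  cases j with
  | inl i =>
    refine ⟨fun k => if k = Sum.inr i then 1 else 0, ?_⟩
    rw [phi_apply]
    simp [Finset.sum_ite_eq', hj1]
  | inr i =>
    refine ⟨fun k => if k = Sum.inl i then 1 else 0, ?_⟩
    rw [phi_apply]
    simp [Finset.sum_ite_eq', hj1]

lemma phi_smul_right (m : ℕ) (c : ZMod 2) (u v : Vm m) : phi m u (c • v) = c * phi m u v := by
  rw [phi_comm, phi_smul_left, phi_comm]

/-- `phi` as a linear functional in the first argument. -/
noncomputable def phiL (m : ℕ) (w : Vm m) : Vm m →ₗ[ZMod 2] ZMod 2 where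
  toFun x := phi m x w
  map_add' x y := phi_add_left m x y w
  map_smul' c x := phi_smul_left m c x w

/-- `phi` as a bilinear form. -/
noncomputable def phiB (m : ℕ) : LinearMap.BilinForm (ZMod 2) (Vm m) :=
  LinearMap.mk₂ (ZMod 2) (phi m) (phi_add_left m) (phi_smul_left m)
    (phi_add_right m) (phi_smul_right m)

lemma phiB_apply (m : ℕ) (u v : Vm m) : phiB m u v = phi m u v := rfl

lemma phiB_nondeg (m : ℕ) : (phiB m).Nondegenerate := by
  refine ⟨fun x hx => ?_, fun x hx => ?_⟩
  · by_contra hx0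
    obtain ⟨y, hy⟩ := exists_phi_one hx0
    have := hx y
    rw [phiB_apply, phi_comm] at this
    rw [this] at hy
    exact one_ne_zero hy.symm
  · by_contra hx0
    obtain ⟨y, hy⟩ := exists_phi_one hx0
    have := hx y
    rw [phiB_apply] at this
    rw [this] at hy
    exact one_ne_zero hy.symm

lemma phiB_refl (m : ℕ) : (phiB m).IsRefl := by
  intro x y h
  rw [phiB_apply] at h ⊢
  rw [phi_comm]
  exact h

lemma finrank_Vm (m : ℕ) : Module.finrank (ZMod 2) (Vm m) = 2 * m := by
  simp [Module.finrank_pi]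
  ring

lemma exists_hyp_pair {m : ℕ} (hm : 4 ≤ m) (w₁ w₂ : Vm m) :
    ∃ u v : Vm m, phi m u w₁ = 0 ∧ phi m u w₂ = 0 ∧ phi m v w₁ = 0 ∧ phi m v w₂ = 0 ∧
      phi m u v = 1 := by
  classical
  set L := (phiL m w₁).prod (phiL m w₂) with hL
  set K : Submodule (ZMod 2) (Vm m) := LinearMap.ker L with hK
  have hrange : Module.finrank (ZMod 2) (LinearMap.range L) ≤ 2 := by
    have := Submodule.finrank_le (LinearMap.range L)
    simpa [Module.finrank_self] using this
  have hkerK : 2 * m - 2 ≤ Module.finrank (ZMod 2) K := by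
    have h2 := LinearMap.finrank_range_add_finrank_ker L
    rw [finrank_Vm] at h2
    rw [hK]
    omega
  by_contra hcon
  have hall : ∀ u ∈ K, ∀ v ∈ K, phi m u v = 0 := by
    intro u hu v hv
    have hu1 : phi m u w₁ = 0 := by
      have := hu
      rw [hK, LinearMap.mem_ker, hL] at this
      exact congrArg Prod.fst this
    have hu2 : phi m u w₂ = 0 := by
      have := hu
      rw [hK, LinearMap.mem_ker, hL] at this
      exact congrArg Prod.snd this
    have hv1 : phi m v w₁ = 0 := by
      have := hv
      rw [hK, LinearMap.mem_ker, hL] at this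
      exact congrArg Prod.fst this
    have hv2 : phi m v w₂ = 0 := by
      have := hv
      rw [hK, LinearMap.mem_ker, hL] at this
      exact congrArg Prod.snd this
    rcases z2_cases (phi m u v) with h | h
    · exact h
    · exact absurd ⟨u, v, hu1, hu2, hv1, hv2, h⟩ hcon
  -- K is totally isotropic, contradiction with dimensions
  have hKle : K ≤ (phiB m).orthogonal K := by
    intro x hx
    rw [LinearMap.BilinForm.mem_orthogonal_iff]
    intro n hn
    exact hall n hn x hx
  have hdim := LinearMap.BilinForm.finrank_add_finrank_orthogonal (phiB_refl m) K
  rw [LinearMap.BilinForm.orthogonal_top_eq_bot (phiB_nondeg m)] at hdim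
  rw [inf_bot_eq, finrank_bot, finrank_Vm, add_zero] at hdim
  have hmono : Module.finrank (ZMod 2) K ≤ Module.finrank (ZMod 2) ((phiB m).orthogonal K) :=
    Submodule.finrank_mono hKle
  omega

lemma vmAdd_eq_zero_iff_eq {m : ℕ} (u v : Vm m) : u + v = 0 ↔ u = v := by
  constructor
  · intro h
    have : u + v + v = v := by rw [h]; rw [zero_add]
    rwa [add_assoc, vm_add_self, add_zero] at this
  · intro h; rw [h]; exact vm_add_self v

lemma exists_linear_combo {m : ℕ} {w₁ w₂ : Vm m} (h1 : w₁ ≠ 0) (h2 : w₂ ≠ 0)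
    (h12 : w₁ ≠ w₂) (δ₁ δ₂ : ZMod 2) : ∃ x : Vm m, phi m x w₁ = δ₁ ∧ phi m x w₂ = δ₂ := by
  obtain ⟨p₁, hp₁⟩ := exists_phi_one h1
  obtain ⟨p₂, hp₂⟩ := exists_phi_one h2
  have h3 : w₁ + w₂ ≠ 0 := fun h => h12 ((vmAdd_eq_zero_iff_eq w₁ w₂).mp h)
  obtain ⟨p₃, hp₃⟩ := exists_phi_one h3
  rw [phi_add_right] at hp₃
  set α := phi m p₁ w₂ with hα
  set β := phi m p₂ w₁ with hβ
  set γ := phi m p₃ w₁ with hγ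
  have hp₃2 : phi m p₃ w₂ = 1 + γ := by
    have := hp₃
    rcases z2_cases γ with h | h <;> rcases z2_cases (phi m p₃ w₂) with h' | h' <;>
      rw [h, h'] <;> rw [h, h'] at this <;> first | rfl | (exfalso; revert this; decide)
  have key : ∀ α β γ δ₁ δ₂ : ZMod 2, ∃ c₁ c₂ c₃ : ZMod 2,
      c₁ * 1 + c₂ * β + c₃ * γ = δ₁ ∧ c₁ * α + c₂ * 1 + c₃ * (1 + γ) = δ₂ := by decide
  obtain ⟨c₁, c₂, c₃, e1, e2⟩ := key α β γ δ₁ δ₂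
  refine ⟨c₁ • p₁ + c₂ • p₂ + c₃ • p₃, ?_, ?_⟩
  · rw [phi_add_left, phi_add_left, phi_smul_left, phi_smul_left, phi_smul_left,
      hp₁, ← hβ, ← hγ]
    exact e1
  · rw [phi_add_left, phi_add_left, phi_smul_left, phi_smul_left, phi_smul_left,
      hp₂, ← hα, hp₃2]
    exact e2

/-- Main existence lemma: the quadric meets every affine subspace cut out by two
independent `phi`-conditions. -/
lemma exists_theta_phi2 {m : ℕ} (hm : 4 ≤ m) {w₁ w₂ : Vm m} (h1 : w₁ ≠ 0) (h2 : w₂ ≠ 0)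
    (h12 : w₁ ≠ w₂) (ε δ₁ δ₂ : ZMod 2) :
    ∃ x : Vm m, theta0 m x = ε ∧ phi m x w₁ = δ₁ ∧ phi m x w₂ = δ₂ := by
  obtain ⟨x₀, hx1, hx2⟩ := exists_linear_combo h1 h2 h12 δ₁ δ₂
  obtain ⟨u, v, hu1, hu2, hv1, hv2, huv⟩ := exists_hyp_pair hm w₁ w₂
  set t := theta0 m x₀ with ht
  set A := theta0 m u + phi m x₀ u with hA
  set B := theta0 m v + phi m x₀ v with hB
  have c1 : theta0 m (x₀ + u) = t + A := by
    rw [theta0_add]; ring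
  have c2 : theta0 m (x₀ + v) = t + B := by
    rw [theta0_add]; ring
  have c3 : theta0 m (x₀ + u + v) = t + A + B + 1 := by
    rw [theta0_add, c1, phi_add_left, phi_comm m x₀ v, huv]
    rw [hB, phi_comm m v x₀]
    ring
  have key : ∀ t A B ε : ZMod 2, t = ε ∨ t + A = ε ∨ t + B = ε ∨ t + A + B + 1 = ε := by decide
  rcases key t A B ε with h | h | h | h
  · exact ⟨x₀, h, hx1, hx2⟩
  · exact ⟨x₀ + u, by rw [c1]; exact h,
      by rw [phi_add_left, hu1, add_zero]; exact hx1,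
      by rw [phi_add_left, hu2, add_zero]; exact hx2⟩
  · exact ⟨x₀ + v, by rw [c2]; exact h,
      by rw [phi_add_left, hv1, add_zero]; exact hx1,
      by rw [phi_add_left, hv2, add_zero]; exact hx2⟩
  · exact ⟨x₀ + u + v, by rw [c3]; exact h,
      by rw [phi_add_left, phi_add_left, hu1, hv1, add_zero, add_zero]; exact hx1,
      by rw [phi_add_left, phi_add_left, hu2, hv2, add_zero, add_zero]; exact hx2⟩

lemma exists_w2 {m : ℕ} (hm : 4 ≤ m) {w₁ : Vm m} (h1 : w₁ ≠ 0) :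
    ∃ w₂ : Vm m, w₂ ≠ 0 ∧ w₂ ≠ w₁ ∧ phi m w₁ w₂ = 0 := by
  classical
  set K : Submodule (ZMod 2) (Vm m) := LinearMap.ker (phiL m w₁) with hK
  have hkr : 2 * m - 1 ≤ Module.finrank (ZMod 2) K := by
    have h2 := LinearMap.finrank_range_add_finrank_ker (phiL m w₁)
    rw [finrank_Vm] at h2
    have h3 : Module.finrank (ZMod 2) (LinearMap.range (phiL m w₁)) ≤ 1 := by
      have := Submodule.finrank_le (LinearMap.range (phiL m w₁))
      simpa [Module.finrank_self] using this
    rw [hK]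
    omega
  have hKne : K ≠ ⊥ := by
    intro h
    rw [h, finrank_bot] at hkr
    omega
  obtain ⟨k₁, hk₁K, hk₁0⟩ := Submodule.exists_mem_ne_zero_of_ne_bot hKne
  have hnle : ¬ K ≤ Submodule.span (ZMod 2) {k₁} := by
    intro hle
    have := Submodule.finrank_mono hle
    rw [finrank_span_singleton hk₁0] at this
    omega
  obtain ⟨k₂, hk₂K, hk₂s⟩ := SetLike.not_le_iff_exists.mp hnle
  have hk₂0 : k₂ ≠ 0 := fun h => hk₂s (h ▸ Submodule.zero_mem _)
  have hk₁₂ : k₁ ≠ k₂ := fun h => hk₂s (h ▸ Submodule.mem_span_singleton_self k₁)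
  have hmemK : ∀ x, x ∈ K → phi m w₁ x = 0 := by
    intro x hx
    rw [hK, LinearMap.mem_ker] at hx
    rw [phi_comm]
    exact hx
  by_cases e1 : k₁ = w₁
  · by_cases e2 : k₂ = w₁
    · exact absurd (e1.trans e2.symm) hk₁₂
    · exact ⟨k₂, hk₂0, e2, hmemK k₂ hk₂K⟩
  · exact ⟨k₁, hk₁0, e1, hmemK k₁ hk₁K⟩

lemma exists_theta_phi1 {m : ℕ} (hm : 4 ≤ m) {w : Vm m} (hw : w ≠ 0) (ε δ : ZMod 2) :
    ∃ x : Vm m, theta0 m x = ε ∧ phi m x w = δ := by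
  classical
  have h4 : 0 < m := by omega
  set b0 : Vm m := Pi.single (Sum.inl ⟨0, h4⟩) 1 with hb0
  set b1 : Vm m := Pi.single (Sum.inr ⟨0, h4⟩) 1 with hb1
  have hb0ne : b0 ≠ 0 := by
    intro h
    have := congrFun h (Sum.inl ⟨0, h4⟩)
    simp [hb0] at this
  have hb1ne : b1 ≠ 0 := by
    intro h
    have := congrFun h (Sum.inr ⟨0, h4⟩)
    simp [hb1] at this
  have hb01 : b0 ≠ b1 := by
    intro h
    have := congrFun h (Sum.inl ⟨0, h4⟩)
    simp [hb0, hb1, Pi.single_apply] at this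
  by_cases hw0 : w = b0
  · obtain ⟨x, h1, h2, _⟩ := exists_theta_phi2 hm hw hb1ne (by rw [hw0]; exact hb01) ε δ 0
    exact ⟨x, h1, h2⟩
  · obtain ⟨x, h1, h2, _⟩ := exists_theta_phi2 hm hw hb0ne hw0 ε δ 0
    exact ⟨x, h1, h2⟩

/-- Existence of a quadric point with one `phi`-condition, avoiding two given points
that differ by `w`. -/
lemma exists_theta_phi_avoid {m : ℕ} (hm : 4 ≤ m) {w : Vm m} (hw : w ≠ 0) (p : Vm m)
    (ε δ : ZMod 2) :
    ∃ x : Vm m, theta0 m x = ε ∧ phi m x w = δ ∧ x ≠ p ∧ x ≠ p + w := by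
  obtain ⟨w₂, hw₂0, hw₂w, hww₂⟩ := exists_w2 hm hw
  obtain ⟨x, h1, h2, h3⟩ := exists_theta_phi2 hm hw hw₂0 (fun h => hw₂w h.symm) ε δ
    (1 + phi m p w₂)
  refine ⟨x, h1, h2, ?_, ?_⟩
  · intro h
    rw [h] at h3
    rcases z2_cases (phi m p w₂) with h' | h' <;> rw [h'] at h3 <;> revert h3 <;> decide
  · intro h
    rw [h, phi_add_left, hww₂, add_zero] at h3
    rcases z2_cases (phi m p w₂) with h' | h' <;> rw [h'] at h3 <;> revert h3 <;> decide

lemma chi_symmDiff {α : Type*} [DecidableEq α] (S T : Finset α) :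
    chi (S ∆ T) = chi S + chi T := by
  funext x
  by_cases hs : x ∈ S <;> by_cases ht : x ∈ T <;>
    simp [chi, Finset.mem_symmDiff, hs, ht] <;> decide

lemma sum_symmDiff_eq {α M : Type*} [DecidableEq α] [AddCommGroup M]
    (h2 : ∀ x : M, x + x = 0) (S T : Finset α) (g : α → M) :
    ∑ x ∈ S ∆ T, g x = (∑ x ∈ S, g x) + ∑ x ∈ T, g x := by
  have hST : S ∆ T = (S \ T) ∪ (T \ S) := by
    rw [symmDiff_def, Finset.sup_eq_union]
  have h1 : (∑ x ∈ S \ T, g x) + ∑ x ∈ S ∩ T, g x = ∑ x ∈ S, g x := by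
    rw [← Finset.sdiff_inter_self_left S T]
    exact Finset.sum_sdiff Finset.inter_subset_left
  have h2' : (∑ x ∈ T \ S, g x) + ∑ x ∈ S ∩ T, g x = ∑ x ∈ T, g x := by
    rw [Finset.inter_comm S T, ← Finset.sdiff_inter_self_left T S]
    exact Finset.sum_sdiff Finset.inter_subset_left
  rw [hST, Finset.sum_union disjoint_sdiff_sdiff]
  have key : ((∑ x ∈ S \ T, g x) + ∑ x ∈ T \ S, g x)
      + ((∑ x ∈ S ∩ T, g x) + ∑ x ∈ S ∩ T, g x) = (∑ x ∈ S, g x) + ∑ x ∈ T, g x := by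
    rw [← h1, ← h2']; abel
  rw [h2 (∑ x ∈ S ∩ T, g x), add_zero] at key
  exact key

lemma card_cast_z2 {α : Type*} (S : Finset α) : ((S.card : ZMod 2)) = ∑ _x ∈ S, (1 : ZMod 2) := by
  simp

lemma card_symmDiff_z2 {α : Type*} [DecidableEq α] (S T : Finset α) :
    (((S ∆ T).card : ZMod 2)) = (S.card : ZMod 2) + (T.card : ZMod 2) := by
  rw [card_cast_z2, card_cast_z2, card_cast_z2]
  exact sum_symmDiff_eq z2_add_self S T _

lemma even_iff_z2 (n : ℕ) : Even n ↔ (n : ZMod 2) = 0 := by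
  rw [even_iff_two_dvd, ← ZMod.natCast_eq_zero_iff]

lemma hammingDist_chi {α : Type*} [Fintype α] [DecidableEq α] (S T : Finset α) :
    hammingDist (chi S) (chi T) = (S ∆ T).card := by
  rw [hammingDist]
  congr 1
  ext x
  rw [Finset.mem_filter]
  by_cases hs : x ∈ S <;> by_cases ht : x ∈ T <;>
    simp [chi, Finset.mem_symmDiff, hs, ht] <;> decide

lemma chi_inj {α : Type*} [DecidableEq α] {S T : Finset α} (h : chi S = chi T) : S = T := by
  ext x
  have := congrFun h x
  by_cases hs : x ∈ S <;> by_cases ht : x ∈ T <;> simp [chi, hs, ht] at this ⊢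

lemma chi_repr {α : Type*} [Fintype α] [DecidableEq α] (w : α → ZMod 2) :
    w = chi (Finset.univ.filter (fun x => w x = 1)) := by
  funext x
  rcases z2_cases (w x) with h | h <;> simp [chi, h]

lemma finsetCardFour {α : Type*} [DecidableEq α] {a b c d : α} (hab : a ≠ b) (hac : a ≠ c)
    (had : a ≠ d) (hbc : b ≠ c) (hbd : b ≠ d) (hcd : c ≠ d) :
    ({a, b, c, d} : Finset α).card = 4 := by
  rw [Finset.card_insert_of_notMem (by simp [hab, hac, had]),
    Finset.card_insert_of_notMem (by simp [hbc, hbd]),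
    Finset.card_insert_of_notMem (by simp [hcd]), Finset.card_singleton]

lemma finsetSumFour {α M : Type*} [DecidableEq α] [AddCommMonoid M] {a b c d : α} (hab : a ≠ b)
    (hac : a ≠ c) (had : a ≠ d) (hbc : b ≠ c) (hbd : b ≠ d) (hcd : c ≠ d) (g : α → M) :
    ∑ x ∈ ({a, b, c, d} : Finset α), g x = g a + g b + g c + g d := by
  rw [Finset.sum_insert (by simp [hab, hac, had]), Finset.sum_insert (by simp [hbc, hbd]),
    Finset.sum_insert (by simp [hcd]), Finset.sum_singleton]
  abel

lemma chi_add_self {α : Type*} [DecidableEq α] (S : Finset α) : chi S + chi S = 0 := by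
  funext x
  exact z2_add_self _

lemma veps_coe_ne {m : ℕ} {ε : ZMod 2} {a b : Veps m ε} (h : a ≠ b) : (a : Vm m) ≠ (b : Vm m) :=
  fun h' => h (Subtype.ext h')

lemma veps_add_ne_zero {m : ℕ} {ε : ZMod 2} {a b : Veps m ε} (h : a ≠ b) :
    (a : Vm m) + (b : Vm m) ≠ 0 :=
  fun h' => veps_coe_ne h ((vmAdd_eq_zero_iff_eq _ _).mp h')

lemma theta0_coe_sum {m : ℕ} {ε : ZMod 2} (a b : Veps m ε) :
    theta0 m ((a : Vm m) + b) = phi m (a : Vm m) (b : Vm m) := by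
  rw [theta0_add, a.2, b.2]
  linear_combination z2_add_self ε

/-- The basic reduction step: given a good triple in `T`, exchange it for its fourth point. -/
lemma stepLemma {m : ℕ} {ε : ZMod 2} (T : Finset (Veps m ε)) (a b c : Veps m ε)
    (ha : a ∈ T) (hb : b ∈ T) (hc : c ∈ T) (hab : a ≠ b) (hac : a ≠ c) (hbc : b ≠ c)
    (hphi : phi m (a : Vm m) b + phi m (a : Vm m) c + phi m (b : Vm m) c = 0) :
    ∃ T' Q : Finset (Veps m ε), Q.card = 4 ∧ (∑ x ∈ Q, (x : Vm m)) = 0 ∧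
      chi T = chi T' + chi Q ∧ T'.card + 2 ≤ T.card ∧
      ((T'.card : ZMod 2) = (T.card : ZMod 2)) ∧
      (∑ x ∈ T', (x : Vm m)) = ∑ x ∈ T, (x : Vm m) := by
  classical
  set d : Vm m := (a : Vm m) + b + c with hd_def
  have hd : theta0 m d = ε := by
    rw [hd_def, theta0_add, theta0_coe_sum, c.2, phi_add_left]
    linear_combination hphi
  set dV : Veps m ε := ⟨d, hd⟩ with hdV_def
  have hd_a : a ≠ dV := by
    intro h
    have h' : (a : Vm m) + b + c = (a : Vm m) := (congrArg Subtype.val h).symm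
    rw [add_assoc] at h'
    have h3 : (a : Vm m) + ((b : Vm m) + c) = (a : Vm m) + 0 := by rw [add_zero]; exact h'
    exact veps_add_ne_zero hbc (add_left_cancel h3)
  have hd_b : b ≠ dV := by
    intro h
    have h' : (a : Vm m) + b + c = (b : Vm m) := (congrArg Subtype.val h).symm
    have h3 : (b : Vm m) + ((a : Vm m) + c) = (a : Vm m) + b + c := by abel
    have h4 : (b : Vm m) + ((a : Vm m) + c) = (b : Vm m) + 0 := by
      rw [add_zero]; exact h3.trans h'
    exact veps_add_ne_zero hac (add_left_cancel h4)
  have hd_c : c ≠ dV := by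
    intro h
    have h' : (a : Vm m) + b + c = (c : Vm m) := (congrArg Subtype.val h).symm
    have h3 : (c : Vm m) + ((a : Vm m) + b) = (a : Vm m) + b + c := by abel
    have h4 : (c : Vm m) + ((a : Vm m) + b) = (c : Vm m) + 0 := by
      rw [add_zero]; exact h3.trans h'
    exact veps_add_ne_zero hab (add_left_cancel h4)
  set Q : Finset (Veps m ε) := {a, b, c, dV} with hQ_def
  have hQ4 : Q.card = 4 := finsetCardFour hab hac hd_a hbc hd_b hd_c
  have hQs : (∑ x ∈ Q, (x : Vm m)) = 0 := by
    rw [hQ_def, finsetSumFour hab hac hd_a hbc hd_b hd_c]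
    show (a : Vm m) + b + c + d = 0
    rw [hd_def]
    exact vm_add_self _
  refine ⟨T ∆ Q, Q, hQ4, hQs, ?_, ?_, ?_, ?_⟩
  · rw [chi_symmDiff, add_assoc, chi_add_self, add_zero]
  · have hsub1 : Q \ T ⊆ {dV} := by
      intro x hx
      rw [Finset.mem_sdiff] at hx
      rcases hx with ⟨hxQ, hxT⟩
      rw [hQ_def] at hxQ
      simp only [Finset.mem_insert, Finset.mem_singleton] at hxQ
      rcases hxQ with rfl | rfl | rfl | rfl
      · exact absurd ha hxT
      · exact absurd hb hxT
      · exact absurd hc hxT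
      · exact Finset.mem_singleton_self _
    have h1 : (Q \ T).card ≤ 1 := le_trans (Finset.card_le_card hsub1) (by simp)
    have hsub2 : ({a, b, c} : Finset (Veps m ε)) ⊆ T ∩ Q := by
      intro x hx
      simp only [Finset.mem_insert, Finset.mem_singleton] at hx
      rw [Finset.mem_inter, hQ_def]
      rcases hx with rfl | rfl | rfl
      · exact ⟨ha, by simp⟩
      · exact ⟨hb, by simp⟩
      · exact ⟨hc, by simp⟩
    have h3 : 3 ≤ (T ∩ Q).card := by
      have hc3 : ({a, b, c} : Finset (Veps m ε)).card = 3 := by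
        rw [Finset.card_insert_of_notMem (by simp [hab, hac]),
          Finset.card_insert_of_notMem (by simp [hbc]), Finset.card_singleton]
      rw [← hc3]
      exact Finset.card_le_card hsub2
    have h4 := Finset.card_sdiff_add_card_inter T Q
    have h5 : (T ∆ Q).card = (T \ Q).card + (Q \ T).card := by
      rw [symmDiff_def, Finset.sup_eq_union]
      exact Finset.card_union_of_disjoint disjoint_sdiff_sdiff
    omega
  · rw [card_symmDiff_z2, hQ4]
    have h4 : ((4 : ℕ) : ZMod 2) = 0 := by decide
    rw [h4, add_zero]
  · rw [sum_symmDiff_eq vm_add_self, hQs, add_zero]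

lemma chiEmpty {α : Type*} [DecidableEq α] : chi (∅ : Finset α) = 0 := by
  funext x; simp [chi]

lemma genMem {m : ℕ} {ε : ZMod 2} {Q : Finset (Veps m ε)} (h4 : Q.card = 4)
    (hs : (∑ x ∈ Q, (x : Vm m)) = 0) : chi Q ∈ Ceps m ε :=
  Submodule.subset_span ⟨Q, h4, hs, rfl⟩

lemma chi_mem_Ceps {m : ℕ} {ε : ZMod 2} (hm : 4 ≤ m) (T : Finset (Veps m ε))
    (he : Even T.card) (hs : (∑ x ∈ T, (x : Vm m)) = 0) : chi T ∈ Ceps m ε := by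
  classical
  suffices H : ∀ n (T : Finset (Veps m ε)), T.card ≤ n → Even T.card →
      (∑ x ∈ T, (x : Vm m)) = 0 → chi T ∈ Ceps m ε from H T.card T le_rfl he hs
  intro n
  induction n with
  | zero =>
    intro T hT _ _
    have hT0 : T = ∅ := Finset.card_eq_zero.mp (Nat.le_zero.mp hT)
    rw [hT0, chiEmpty]
    exact Submodule.zero_mem _
  | succ n ih =>
    intro T hT he hs
    by_cases hle : T.card ≤ n
    · exact ih T hle he hs
    have hTcard : T.card = n + 1 := le_antisymm hT (not_le.mp hle)
    rcases Nat.lt_or_ge T.card 6 with hsmall | hbig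
    · have hcase : T.card = 0 ∨ T.card = 2 ∨ T.card = 4 := by
        rcases he with ⟨k, hk⟩; omega
      rcases hcase with h | h | h
      · rw [Finset.card_eq_zero.mp h, chiEmpty]
        exact Submodule.zero_mem _
      · obtain ⟨x, y, hxy, hT2⟩ := Finset.card_eq_two.mp h
        rw [hT2, Finset.sum_insert (by simp [hxy]), Finset.sum_singleton] at hs
        exact absurd (Subtype.ext ((vmAdd_eq_zero_iff_eq _ _).mp hs)) hxy
      · exact genMem h hs
    · by_cases hgood : ∃ a, a ∈ T ∧ ∃ b, b ∈ T ∧ ∃ c, c ∈ T ∧ a ≠ b ∧ a ≠ c ∧ b ≠ c ∧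
          phi m (a : Vm m) b + phi m (a : Vm m) c + phi m (b : Vm m) c = 0
      · obtain ⟨a, ha, b, hb, c, hc, hab, hac, hbc, hphi⟩ := hgood
        obtain ⟨T', Q, hQ4, hQs, hchi, hcard, hpar, hsum⟩ := stepLemma T a b c ha hb hc hab hac hbc hphi
        have he' : Even T'.card := by
          rw [even_iff_z2, hpar, ← even_iff_z2]; exact he
        have hle' : T'.card ≤ n := by omega
        have hmem := ih T' hle' he' (by rw [hsum]; exact hs)
        rw [hchi]
        exact Submodule.add_mem _ hmem (genMem hQ4 hQs)
      · -- T contains no good triple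
        push_neg at hgood
        -- pick b0, c0 ∈ T distinct
        obtain ⟨b0, hb0T, c0, hc0T, hb0c0⟩ := Finset.one_lt_card.mp (show 1 < T.card by omega)
        -- pick p, q, r ∈ T \ {b0, c0} distinct
        set T₂ : Finset (Veps m ε) := (T.erase b0).erase c0 with hT₂_def
        have hc0b0 : c0 ∈ T.erase b0 := Finset.mem_erase.mpr ⟨Ne.symm hb0c0, hc0T⟩
        have hT₂card : T₂.card = T.card - 2 := by
          rw [hT₂_def, Finset.card_erase_of_mem hc0b0, Finset.card_erase_of_mem hb0T]
          omega
        obtain ⟨p, hp⟩ := Finset.card_pos.mp (show 0 < T₂.card by omega)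
        obtain ⟨q, hq⟩ := Finset.card_pos.mp (show 0 < (T₂.erase p).card by
          rw [Finset.card_erase_of_mem hp]; omega)
        obtain ⟨r, hr⟩ := Finset.card_pos.mp (show 0 < ((T₂.erase p).erase q).card by
          rw [Finset.card_erase_of_mem hq, Finset.card_erase_of_mem hp]; omega)
        have hqp : q ≠ p := (Finset.mem_erase.mp hq).1
        have hq₂ : q ∈ T₂ := (Finset.mem_erase.mp hq).2
        have hrq : r ≠ q := (Finset.mem_erase.mp hr).1
        have hrp : r ≠ p := (Finset.mem_erase.mp (Finset.mem_erase.mp hr).2).1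
        have hr₂ : r ∈ T₂ := (Finset.mem_erase.mp (Finset.mem_erase.mp hr).2).2
        have hmem₂ : ∀ x, x ∈ T₂ → x ∈ T ∧ x ≠ b0 ∧ x ≠ c0 := by
          intro x hx
          rw [hT₂_def, Finset.mem_erase, Finset.mem_erase] at hx
          exact ⟨hx.2.2, hx.2.1, hx.1⟩
        -- the key construction, for any suitable pair (p, q)
        have key : ∀ p q : Veps m ε, p ∈ T → q ∈ T → p ≠ q → p ≠ b0 → p ≠ c0 → q ≠ b0 →
            q ≠ c0 → (p : Vm m) + q ≠ (b0 : Vm m) + c0 → chi T ∈ Ceps m ε := by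
          intro p q hpT hqT hpq hpb hpc hqb hqc hne
          set w₁ : Vm m := (b0 : Vm m) + c0 with hw₁_def
          set w₂ : Vm m := (p : Vm m) + q with hw₂_def
          have hw₁0 : w₁ ≠ 0 := veps_add_ne_zero hb0c0
          have hw₂0 : w₂ ≠ 0 := veps_add_ne_zero hpq
          have hw12 : w₁ ≠ w₂ := fun h => hne h.symm
          obtain ⟨x, hxθ, hx1, hx2⟩ := exists_theta_phi2 hm hw₁0 hw₂0 hw12 ε
            (phi m (b0 : Vm m) c0) (phi m (p : Vm m) q)
          set xV : Veps m ε := ⟨x, hxθ⟩ with hxV_def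
          have hxcoe : (xV : Vm m) = x := rfl
          have hxT : xV ∉ T := by
            intro hmem
            by_cases hxb : xV = b0
            · have hbx : (b0 : Vm m) = x := (congrArg Subtype.val hxb).symm
              rw [← hbx, hw₂_def, phi_add_right] at hx2
              refine hgood b0 hb0T p hpT q hqT (Ne.symm hpb) (Ne.symm hqb) hpq ?_
              rw [hx2]
              exact z2_add_self _
            by_cases hxc : xV = c0
            · have hcx : (c0 : Vm m) = x := (congrArg Subtype.val hxc).symm
              rw [← hcx, hw₂_def, phi_add_right] at hx2
              refine hgood c0 hc0T p hpT q hqT (Ne.symm hpc) (Ne.symm hqc) hpq ?_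
              rw [hx2]
              exact z2_add_self _
            · refine hgood b0 hb0T c0 hc0T xV hmem hb0c0 (fun h => hxb h.symm)
                (fun h => hxc h.symm) ?_
              have hsum2 : phi m (b0 : Vm m) x + phi m (c0 : Vm m) x = phi m (b0 : Vm m) c0 := by
                rw [phi_comm m (b0 : Vm m) x, phi_comm m (c0 : Vm m) x, ← phi_add_right,
                  ← hw₁_def]
                exact hx1
              rw [hxcoe, add_assoc, hsum2]
              exact z2_add_self _
          have hdθ : theta0 m (w₁ + x) = ε := by
            have ht : theta0 m w₁ = phi m (b0 : Vm m) c0 := by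
              rw [hw₁_def]; exact theta0_coe_sum b0 c0
            have hc : phi m w₁ x = phi m (b0 : Vm m) c0 := by
              rw [phi_comm]; exact hx1
            rw [theta0_add, hxθ, ht, hc]
            linear_combination z2_add_self (phi m (b0 : Vm m) c0)
          set dV : Veps m ε := ⟨w₁ + x, hdθ⟩ with hdV_def
          have hdcoe : (dV : Vm m) = w₁ + x := rfl
          have hdT : dV ∉ T := by
            intro hmem
            by_cases hdb : dV = b0
            · have h' : w₁ + x = (b0 : Vm m) := congrArg Subtype.val hdb
              have h3 : (b0 : Vm m) + ((c0 : Vm m) + x) = w₁ + x := by rw [hw₁_def]; abel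
              have h4 : (b0 : Vm m) + ((c0 : Vm m) + x) = (b0 : Vm m) + 0 := by
                rw [add_zero]; exact h3.trans h'
              have h6 : x = (c0 : Vm m) := ((vmAdd_eq_zero_iff_eq _ _).mp (add_left_cancel h4)).symm
              exact hxT (by rw [show xV = c0 from Subtype.ext h6]; exact hc0T)
            by_cases hdc : dV = c0
            · have h' : w₁ + x = (c0 : Vm m) := congrArg Subtype.val hdc
              have h3 : (c0 : Vm m) + ((b0 : Vm m) + x) = w₁ + x := by rw [hw₁_def]; abel
              have h4 : (c0 : Vm m) + ((b0 : Vm m) + x) = (c0 : Vm m) + 0 := by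
                rw [add_zero]; exact h3.trans h'
              have h6 : x = (b0 : Vm m) := ((vmAdd_eq_zero_iff_eq _ _).mp (add_left_cancel h4)).symm
              exact hxT (by rw [show xV = b0 from Subtype.ext h6]; exact hb0T)
            · refine hgood b0 hb0T c0 hc0T dV hmem hb0c0 (fun h => hdb h.symm)
                (fun h => hdc h.symm) ?_
              have hsum2 : phi m (b0 : Vm m) (w₁ + x) + phi m (c0 : Vm m) (w₁ + x)
                  = phi m (b0 : Vm m) c0 := by
                rw [phi_comm m (b0 : Vm m) _, phi_comm m (c0 : Vm m) _, ← phi_add_right,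
                  ← hw₁_def, phi_add_left, phi_self, zero_add]
                exact hx1
              rw [hdcoe, add_assoc, hsum2]
              exact z2_add_self _
          have hdx : dV ≠ xV := by
            intro h
            have h' : w₁ + x = x := congrArg Subtype.val h
            have h3 : x + w₁ = w₁ + x := by abel
            have h4 : x + w₁ = x + 0 := by rw [add_zero]; exact h3.trans h'
            exact hw₁0 (add_left_cancel h4)
          have hbx : b0 ≠ xV := fun h => hxT (h ▸ hb0T)
          have hcx : c0 ≠ xV := fun h => hxT (h ▸ hc0T)
          have hbd : b0 ≠ dV := fun h => hdT (h ▸ hb0T)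
          have hcd : c0 ≠ dV := fun h => hdT (h ▸ hc0T)
          have hxd : xV ≠ dV := fun h => hdx h.symm
          set Q : Finset (Veps m ε) := {b0, c0, xV, dV} with hQ_def
          have hQ4 : Q.card = 4 := finsetCardFour hb0c0 hbx hbd hcx hcd hxd
          have hQs : (∑ y ∈ Q, (y : Vm m)) = 0 := by
            rw [hQ_def, finsetSumFour hb0c0 hbx hbd hcx hcd hxd, hxcoe, hdcoe, ← hw₁_def]
            exact vm_add_self (w₁ + x)
          have hchiT : chi T = chi (T ∆ Q) + chi Q := by
            rw [chi_symmDiff, add_assoc, chi_add_self, add_zero]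
          have hTQ : T ∩ Q = {b0, c0} := by
            ext z
            rw [Finset.mem_inter, hQ_def]
            simp only [Finset.mem_insert, Finset.mem_singleton]
            constructor
            · rintro ⟨hzT, rfl | rfl | rfl | rfl⟩
              · exact Or.inl rfl
              · exact Or.inr rfl
              · exact absurd hzT hxT
              · exact absurd hzT hdT
            · rintro (rfl | rfl)
              · exact ⟨hb0T, Or.inl rfl⟩
              · exact ⟨hc0T, Or.inr (Or.inl rfl)⟩
          have hQT : Q \ T = {xV, dV} := by
            ext z
            rw [Finset.mem_sdiff, hQ_def]
            simp only [Finset.mem_insert, Finset.mem_singleton]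
            constructor
            · rintro ⟨rfl | rfl | rfl | rfl, hzT⟩
              · exact absurd hb0T hzT
              · exact absurd hc0T hzT
              · exact Or.inl rfl
              · exact Or.inr rfl
            · rintro (rfl | rfl)
              · exact ⟨Or.inr (Or.inr (Or.inl rfl)), hxT⟩
              · exact ⟨Or.inr (Or.inr (Or.inr rfl)), hdT⟩
          have hc2 : (T ∩ Q).card = 2 := by
            rw [hTQ, Finset.card_insert_of_notMem (by simp [hb0c0]), Finset.card_singleton]
          have hc2' : (Q \ T).card = 2 := by
            rw [hQT, Finset.card_insert_of_notMem (by simp [hxd]), Finset.card_singleton]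
          have h4 := Finset.card_sdiff_add_card_inter T Q
          have h5 : (T ∆ Q).card = (T \ Q).card + (Q \ T).card := by
            rw [symmDiff_def, Finset.sup_eq_union]
            exact Finset.card_union_of_disjoint disjoint_sdiff_sdiff
          have hTQcard : (T ∆ Q).card = T.card := by omega
          have hTQsum : (∑ y ∈ T ∆ Q, (y : Vm m)) = 0 := by
            rw [sum_symmDiff_eq vm_add_self, hs, hQs, add_zero]
          -- the new set contains the good triple xV, p, q
          have hpQ : p ∉ Q := by
            rw [hQ_def]
            simp only [Finset.mem_insert, Finset.mem_singleton]
            rintro (rfl | rfl | rfl | rfl)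
            · exact hpb rfl
            · exact hpc rfl
            · exact hxT hpT
            · exact hdT hpT
          have hqQ : q ∉ Q := by
            rw [hQ_def]
            simp only [Finset.mem_insert, Finset.mem_singleton]
            rintro (rfl | rfl | rfl | rfl)
            · exact hqb rfl
            · exact hqc rfl
            · exact hxT hqT
            · exact hdT hqT
          have hx' : xV ∈ T ∆ Q := Finset.mem_symmDiff.mpr
            (Or.inr ⟨by rw [hQ_def]; simp, hxT⟩)
          have hp' : p ∈ T ∆ Q := Finset.mem_symmDiff.mpr (Or.inl ⟨hpT, hpQ⟩)
          have hq' : q ∈ T ∆ Q := Finset.mem_symmDiff.mpr (Or.inl ⟨hqT, hqQ⟩)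
          have hxp : xV ≠ p := fun h => hxT (h ▸ hpT)
          have hxq : xV ≠ q := fun h => hxT (h ▸ hqT)
          have hphi3 : phi m (xV : Vm m) p + phi m (xV : Vm m) q + phi m (p : Vm m) q = 0 := by
            have h7 : phi m x (p : Vm m) + phi m x (q : Vm m) = phi m (p : Vm m) q := by
              rw [← phi_add_right, ← hw₂_def]
              exact hx2
            rw [hxcoe, h7]
            exact z2_add_self _
          obtain ⟨T'', Q', h'Q4, h'Qs, h'chi, h'card, h'par, h'sum⟩ :=
            stepLemma (T ∆ Q) xV p q hx' hp' hq' hxp hxq hpq hphi3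
          have he'' : Even T''.card := by
            rw [even_iff_z2, h'par, hTQcard, ← even_iff_z2]
            exact he
          have hle'' : T''.card ≤ n := by omega
          have hmem'' := ih T'' hle'' he'' (by rw [h'sum]; exact hTQsum)
          rw [hchiT, h'chi]
          exact Submodule.add_mem _ (Submodule.add_mem _ hmem'' (genMem h'Q4 h'Qs))
            (genMem hQ4 hQs)
        by_cases hpq2 : (p : Vm m) + q = (b0 : Vm m) + c0
        · refine key p r (hmem₂ p hp).1 (hmem₂ r hr₂).1 (Ne.symm hrp) (hmem₂ p hp).2.1
            (hmem₂ p hp).2.2 (hmem₂ r hr₂).2.1 (hmem₂ r hr₂).2.2 ?_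
          intro h
          have h2 : (p : Vm m) + r = (p : Vm m) + q := h.trans hpq2.symm
          exact hrq (Subtype.ext (add_left_cancel h2))
        · exact key p q (hmem₂ p hp).1 (hmem₂ q hq₂).1 (fun h => hqp h.symm) (hmem₂ p hp).2.1
            (hmem₂ p hp).2.2 (hmem₂ q hq₂).2.1 (hmem₂ q hq₂).2.2 hpq2

lemma odd_iff_z2 (n : ℕ) : ¬ Even n ↔ (n : ZMod 2) = 1 := by
  rw [even_iff_z2]
  rcases z2_cases (n : ZMod 2) with h | h <;> rw [h] <;> simp

lemma sum_chi {α : Type*} [Fintype α] [DecidableEq α] (S : Finset α) :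
    ∑ x, chi S x = (S.card : ZMod 2) := by
  rw [show ((S.card : ZMod 2)) = ∑ _x ∈ S, (1 : ZMod 2) by simp]
  rw [← Finset.sum_subset (Finset.subset_univ S) (fun x _ hx => by simp [chi, hx])]
  exact Finset.sum_congr rfl (fun x hx => by simp [chi, hx])

lemma sum_chi_smul {α M : Type*} [Fintype α] [DecidableEq α] [AddCommMonoid M]
    [Module (ZMod 2) M] (S : Finset α) (g : α → M) :
    ∑ x, chi S x • g x = ∑ x ∈ S, g x := by
  rw [← Finset.sum_subset (Finset.subset_univ S) (fun x _ hx => by simp [chi, hx])]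
  exact Finset.sum_congr rfl (fun x hx => by simp [chi, hx])

/-- Every codeword is the characteristic vector of an even set summing to zero. -/
lemma code_struct {m : ℕ} {ε : ZMod 2} {c : Veps m ε → ZMod 2} (hc : c ∈ Ceps m ε) :
    ∃ T : Finset (Veps m ε), c = chi T ∧ Even T.card ∧ (∑ x ∈ T, (x : Vm m)) = 0 := by
  classical
  have hP : (∑ x, c x = 0) ∧ (∑ x, c x • Subtype.val x) = 0 := by
    refine Submodule.span_induction (p := fun w _ => (∑ x, w x = 0) ∧
      (∑ x, w x • Subtype.val x) = 0) ?_ ?_ ?_ ?_ hc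
    · rintro w ⟨S, h4, hsum, rfl⟩
      constructor
      · rw [sum_chi, h4]; decide
      · rw [sum_chi_smul]; exact hsum
    · constructor <;> simp
    · intro x y _ _ hx hy
      constructor
      · simp only [Pi.add_apply, add_smul, Finset.sum_add_distrib]
        rw [hx.1, hy.1, add_zero]
      · simp only [Pi.add_apply, add_smul, Finset.sum_add_distrib]
        rw [hx.2, hy.2, add_zero]
    · intro a x _ hx
      constructor
      · simp only [Pi.smul_apply, smul_eq_mul, ← Finset.mul_sum]
        rw [hx.1, mul_zero]
      · simp only [Pi.smul_apply, smul_eq_mul, mul_smul, ← Finset.smul_sum]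
        rw [hx.2, smul_zero]
  set T : Finset (Veps m ε) := Finset.univ.filter (fun x => c x = 1) with hT_def
  have hmemT : ∀ x, x ∈ T ↔ c x = 1 := by
    intro x; rw [hT_def, Finset.mem_filter]; simp
  refine ⟨T, chi_repr c, ?_, ?_⟩
  · rw [even_iff_z2]
    have h1 : ∑ x, c x = (T.card : ZMod 2) := by
      rw [show ((T.card : ZMod 2)) = ∑ _x ∈ T, (1 : ZMod 2) by simp]
      rw [← Finset.sum_subset (Finset.subset_univ T) (fun x _ hx => ?_)]
      · exact Finset.sum_congr rfl (fun x hx => (hmemT x).mp hx)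
      · rcases z2_cases (c x) with h | h
        · exact h
        · exact absurd ((hmemT x).mpr h) hx
    rw [← h1, hP.1]
  · have h2 : ∑ x, c x • Subtype.val x = ∑ x ∈ T, (x : Vm m) := by
      rw [← Finset.sum_subset (Finset.subset_univ T) (fun x _ hx => ?_)]
      · refine Finset.sum_congr rfl (fun x hx => ?_)
        rw [(hmemT x).mp hx, one_smul]
      · rcases z2_cases (c x) with h | h
        · rw [h, zero_smul]
        · exact absurd ((hmemT x).mpr h) hx
    rw [← h2, hP.2]

lemma phi_zero_left {m : ℕ} (w : Vm m) : phi m 0 w = 0 := by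
  have h := phi_add_left m 0 0 w
  rw [add_zero] at h
  rcases z2_cases (phi m 0 w) with h' | h'
  · exact h'
  · rw [h'] at h; exact absurd h (by decide)

lemma exists_basis_ne_zero {m : ℕ} (hm : 4 ≤ m) : ∃ b : Vm m, b ≠ 0 := by
  have h4 : 0 < m := by omega
  refine ⟨Pi.single (Sum.inl ⟨0, h4⟩) 1, fun h => ?_⟩
  have := congrFun h (Sum.inl ⟨0, h4⟩)
  simp at this

lemma existsTheta {m : ℕ} (hm : 4 ≤ m) (ε : ZMod 2) : ∃ x : Vm m, theta0 m x = ε := by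
  obtain ⟨b, hb⟩ := exists_basis_ne_zero hm
  obtain ⟨x, hx, -⟩ := exists_theta_phi1 hm hb ε 0
  exact ⟨x, hx⟩

lemma exists_theta_ne_zero {m : ℕ} (hm : 4 ≤ m) (ε : ZMod 2) :
    ∃ x : Vm m, theta0 m x = ε ∧ x ≠ 0 := by
  obtain ⟨b, hb⟩ := exists_basis_ne_zero hm
  obtain ⟨x, hx, hφ⟩ := exists_theta_phi1 hm hb ε 1
  refine ⟨x, hx, fun h => ?_⟩
  rw [h, phi_zero_left] at hφ
  exact absurd hφ (by decide)

lemma cancel_add_add {m : ℕ} (u w : Vm m) : u + (u + w) = w := by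
  rw [← add_assoc, vm_add_self, zero_add]

/-- A three-element subset of the quadric whose sum is off the quadric. -/
lemma existsSpread {m : ℕ} (hm : 4 ≤ m) (ε : ZMod 2) :
    ∃ S : Finset (Veps m ε), ¬ Even S.card ∧ theta0 m (∑ x ∈ S, (x : Vm m)) ≠ ε := by
  classical
  obtain ⟨a, haθ, ha0⟩ := exists_theta_ne_zero hm ε
  obtain ⟨b, hbθ, hbφ⟩ := exists_theta_phi1 hm ha0 ε 1
  have hab : a ≠ b := by
    intro h
    rw [← h, phi_self] at hbφ
    exact absurd hbφ (by decide)
  have hw0 : a + b ≠ 0 := fun h => hab ((vmAdd_eq_zero_iff_eq _ _).mp h)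
  obtain ⟨c, hcθ, hcφ, hca, hcab⟩ := exists_theta_phi_avoid hm hw0 a ε 0
  have hcb : c ≠ b := by
    intro h
    exact hcab (by rw [h, cancel_add_add])
  set aV : Veps m ε := ⟨a, haθ⟩
  set bV : Veps m ε := ⟨b, hbθ⟩
  set cV : Veps m ε := ⟨c, hcθ⟩
  have h1 : aV ≠ bV := fun h => hab (congrArg Subtype.val h)
  have h2 : aV ≠ cV := fun h => hca (congrArg Subtype.val h).symm
  have h3 : bV ≠ cV := fun h => hcb (congrArg Subtype.val h).symm
  refine ⟨{aV, bV, cV}, ?_, ?_⟩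
  · rw [Finset.card_insert_of_notMem (by simp [h1, h2]),
      Finset.card_insert_of_notMem (by simp [h3]), Finset.card_singleton]
    decide
  · rw [Finset.sum_insert (by simp [h1, h2]), Finset.sum_insert (by simp [h3]),
      Finset.sum_singleton]
    show theta0 m (a + (b + c)) ≠ ε
    rw [show a + (b + c) = a + b + c from by abel]
    have hθab : theta0 m (a + b) = 1 := by
      rw [theta0_add, haθ, hbθ, phi_comm, hbφ]
      linear_combination z2_add_self ε
    have hφabc : phi m (a + b) c = 0 := by rw [phi_comm]; exact hcφ
    rw [theta0_add, hθab, hcθ, hφabc, add_zero]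
    rcases z2_cases ε with h | h <;> rw [h] <;> decide

/-- Lower bound: the distance from `chi S` to any codeword is at least the stated value. -/
lemma distLower {m : ℕ} {ε : ZMod 2} (S : Finset (Veps m ε)) :
    ∀ c ∈ Ceps m ε,
      (if Even S.card then (if (∑ x ∈ S, (x : Vm m)) = 0 then 0 else 2)
       else (if theta0 m (∑ x ∈ S, (x : Vm m)) = ε then 1 else 3)) ≤
        hammingDist (chi S) c := by
  intro c hc
  obtain ⟨T, rfl, heT, hsT⟩ := code_struct hc
  rw [hammingDist_chi]
  have hpar : (((S ∆ T).card : ZMod 2)) = (S.card : ZMod 2) := by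
    rw [card_symmDiff_z2, (even_iff_z2 T.card).mp heT, add_zero]
  split_ifs with h1 h2 h3
  · exact Nat.zero_le _
  · have he' : Even (S ∆ T).card := by
      rw [even_iff_z2, hpar, ← even_iff_z2]; exact h1
    have hne : (S ∆ T).card ≠ 0 := by
      intro h0
      have hST : S = T := by
        have h5 := Finset.card_eq_zero.mp h0
        rw [← Finset.bot_eq_empty] at h5
        exact symmDiff_eq_bot.mp h5
      exact h2 (by rw [hST]; exact hsT)
    have := Nat.even_iff.mp he'
    omega
  · have ho : ¬ Even (S ∆ T).card := by
      rw [odd_iff_z2, hpar, ← odd_iff_z2]; exact h1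
    have := Nat.not_even_iff.mp ho
    omega
  · have ho : ¬ Even (S ∆ T).card := by
      rw [odd_iff_z2, hpar, ← odd_iff_z2]; exact h1
    have hne1 : (S ∆ T).card ≠ 1 := by
      intro h1'
      obtain ⟨a, ha⟩ := Finset.card_eq_one.mp h1'
      have hv : (∑ x ∈ S, (x : Vm m)) = (a : Vm m) := by
        have h5 := sum_symmDiff_eq vm_add_self S T (fun x => (x : Vm m))
        rw [ha, Finset.sum_singleton, hsT, add_zero] at h5
        exact h5.symm
      exact h3 (by rw [hv]; exact a.2)
    have := Nat.not_even_iff.mp ho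
    omega

/-- Upper bound: there is a codeword realizing the stated distance. -/
lemma distUpper {m : ℕ} {ε : ZMod 2} (hm : 4 ≤ m) (S : Finset (Veps m ε)) :
    ∃ c ∈ Ceps m ε, hammingDist (chi S) c =
      (if Even S.card then (if (∑ x ∈ S, (x : Vm m)) = 0 then 0 else 2)
       else (if theta0 m (∑ x ∈ S, (x : Vm m)) = ε then 1 else 3)) := by
  classical
  split_ifs with h1 h2 h3
  · exact ⟨chi S, chi_mem_Ceps hm S h1 h2, hammingDist_self _⟩
  · -- Even card, nonzero sum: distance 2
    obtain ⟨a, haθ, haφ⟩ := exists_theta_phi1 hm h2 ε (theta0 m (∑ x ∈ S, (x : Vm m)))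
    set v : Vm m := ∑ x ∈ S, (x : Vm m) with hv_def
    have hbθ : theta0 m (a + v) = ε := by
      rw [theta0_add, haθ, haφ]
      linear_combination z2_add_self (theta0 m v)
    set aV : Veps m ε := ⟨a, haθ⟩
    set bV : Veps m ε := ⟨a + v, hbθ⟩
    have hab : aV ≠ bV := by
      intro h
      have h' : a = a + v := congrArg Subtype.val h
      have h4 : a + 0 = a + v := by rw [add_zero]; exact h'
      exact h2 (add_left_cancel h4).symm
    set P : Finset (Veps m ε) := {aV, bV} with hP_def
    have hPcard : P.card = 2 := by
      rw [hP_def, Finset.card_insert_of_notMem (by simp [hab]), Finset.card_singleton]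
    have hPsum : (∑ x ∈ P, (x : Vm m)) = v := by
      rw [hP_def, Finset.sum_insert (by simp [hab]), Finset.sum_singleton]
      exact cancel_add_add a v
    refine ⟨chi (S ∆ P), chi_mem_Ceps hm _ ?_ ?_, ?_⟩
    · rw [even_iff_z2, card_symmDiff_z2, hPcard, (even_iff_z2 S.card).mp h1, zero_add]
      decide
    · rw [sum_symmDiff_eq vm_add_self, hPsum, ← hv_def]
      exact vm_add_self v
    · rw [hammingDist_chi, symmDiff_symmDiff_cancel_left, hPcard]
  · -- Odd card, sum on the quadric: distance 1
    set v : Vm m := ∑ x ∈ S, (x : Vm m) with hv_def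
    set vV : Veps m ε := ⟨v, h3⟩
    set P : Finset (Veps m ε) := {vV} with hP_def
    refine ⟨chi (S ∆ P), chi_mem_Ceps hm _ ?_ ?_, ?_⟩
    · rw [even_iff_z2, card_symmDiff_z2, hP_def, Finset.card_singleton,
        (odd_iff_z2 S.card).mp h1]
      decide
    · rw [sum_symmDiff_eq vm_add_self, hP_def, Finset.sum_singleton, ← hv_def]
      exact vm_add_self v
    · rw [hammingDist_chi, symmDiff_symmDiff_cancel_left, hP_def, Finset.card_singleton]
  · -- Odd card, sum off the quadric: distance 3
    obtain ⟨z, hzθ⟩ := existsTheta hm ε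
    set v : Vm m := ∑ x ∈ S, (x : Vm m) with hv_def
    have hvz : v ≠ z := by
      intro h
      exact h3 (by rw [h]; exact hzθ)
    have hw0 : v + z ≠ 0 := fun h => hvz ((vmAdd_eq_zero_iff_eq _ _).mp h)
    obtain ⟨x, hxθ, hxφ, hxz, hxzw⟩ := exists_theta_phi_avoid hm hw0 z ε (theta0 m (v + z))
    have hzw : z + (v + z) = v := by
      have h5 : z + (v + z) = v + (z + z) := by abel
      rw [h5, vm_add_self, add_zero]
    have hxv : x ≠ v := by
      intro h
      exact hxzw (h.trans hzw.symm)
    have hbθ : theta0 m (x + (v + z)) = ε := by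
      rw [theta0_add, hxθ, hxφ]
      linear_combination z2_add_self (theta0 m (v + z))
    set xV : Veps m ε := ⟨x, hxθ⟩
    set bV : Veps m ε := ⟨x + (v + z), hbθ⟩
    set zV : Veps m ε := ⟨z, hzθ⟩
    have hxb : xV ≠ bV := by
      intro h
      have h' : x + 0 = x + (v + z) := by
        rw [add_zero]; exact congrArg Subtype.val h
      exact hw0 (add_left_cancel h').symm
    have hxzV : xV ≠ zV := fun h => hxz (congrArg Subtype.val h)
    have hbz : bV ≠ zV := by
      intro h
      have h' : x + (v + z) = z := congrArg Subtype.val h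
      have e : (x + (v + z)) + (v + z) = x := by
        rw [add_assoc, vm_add_self, add_zero]
      have h6 : x = z + (v + z) := by
        calc x = (x + (v + z)) + (v + z) := e.symm
        _ = z + (v + z) := by rw [h']
      exact hxv (h6.trans hzw)
    set P : Finset (Veps m ε) := {xV, bV, zV} with hP_def
    have hPcard : P.card = 3 := by
      rw [hP_def, Finset.card_insert_of_notMem (by simp [hxb, hxzV]),
        Finset.card_insert_of_notMem (by simp [hbz]), Finset.card_singleton]
    have hPsum : (∑ y ∈ P, (y : Vm m)) = v := by
      rw [hP_def, Finset.sum_insert (by simp [hxb, hxzV]), Finset.sum_insert (by simp [hbz]),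
        Finset.sum_singleton]
      show x + ((x + (v + z)) + z) = v
      have e1 : x + ((x + (v + z)) + z) = (x + x) + (v + (z + z)) := by abel
      rw [e1, vm_add_self, vm_add_self, add_zero, zero_add]
    refine ⟨chi (S ∆ P), chi_mem_Ceps hm _ ?_ ?_, ?_⟩
    · rw [even_iff_z2, card_symmDiff_z2, hPcard, (odd_iff_z2 S.card).mp h1]
      decide
    · rw [sum_symmDiff_eq vm_add_self, hPsum, ← hv_def]
      exact vm_add_self v
    · rw [hammingDist_chi, symmDiff_symmDiff_cancel_left, hPcard]

theorem stmt_14 (m : ℕ) (hm : 4 ≤ m) (ε : ZMod 2) :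
    (∀ S : Finset (Veps m ε),
        (∃ c ∈ Ceps m ε, hammingDist (chi S) c =
            (if Even S.card then (if (∑ x ∈ S, (x : Vm m)) = 0 then 0 else 2)
             else (if theta0 m (∑ x ∈ S, (x : Vm m)) = ε then 1 else 3))) ∧
        (∀ c ∈ Ceps m ε,
            (if Even S.card then (if (∑ x ∈ S, (x : Vm m)) = 0 then 0 else 2)
             else (if theta0 m (∑ x ∈ S, (x : Vm m)) = ε then 1 else 3)) ≤
          hammingDist (chi S) c)) ∧
    (∀ w : Veps m ε → ZMod 2, ∃ c ∈ Ceps m ε, hammingDist w c ≤ 3) ∧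
    (∃ w : Veps m ε → ZMod 2, ∀ c ∈ Ceps m ε, 3 ≤ hammingDist w c) := by
  classical
  refine ⟨fun S => ⟨distUpper hm S, distLower S⟩, ?_, ?_⟩
  · intro w
    obtain ⟨c, hc, hd⟩ := distUpper hm (Finset.univ.filter (fun x => w x = 1))
    refine ⟨c, hc, ?_⟩
    rw [chi_repr w, hd]
    split_ifs <;> omega
  · obtain ⟨S, hS1, hS2⟩ := existsSpread hm ε
    refine ⟨chi S, fun c hc => ?_⟩
    have h := distLower S c hc
    rw [if_neg hS1, if_neg hS2] at h
    exact h
end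

section
/- Let D = (Ω,B) be a supersimple 2-(n,4,λ) design and let ∞ ∈ Ω. Suppose that [∞,a]·[a,b]·[b,∞] is the identity permutation of Ω for all distinct points a, b ∈ Ω∖{∞} such that some line of D contains all three of ∞, a, b. Then at least one of the following holds: (1) every element of L(D) has order at most 2, i.e. L(D) is an elementary abelian 2-group (the case of a Boolean design); (2) n = 13 (the exceptional case D = ℙ₃, the projective plane of order 3, with L(D) = M₁₃); or (3) L(D) equals the alternating group on Ω. -/
/-- `IsDesign B lam`: every line has 4 points, every pair of distinct points
lies on exactly `lam` lines, and any two distinct lines meet in at most 2 points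
(supersimplicity). -/
def IsSupersimpleDesign {Ω : Type*} [DecidableEq Ω]
    (B : Finset (Finset Ω)) (lam : ℕ) : Prop :=
  (∀ ℓ ∈ B, ℓ.card = 4) ∧
  (∀ p q : Ω, p ≠ q → (B.filter fun ℓ => p ∈ ℓ ∧ q ∈ ℓ).card = lam) ∧
  (∀ ℓ₁ ∈ B, ∀ ℓ₂ ∈ B, ℓ₁ ≠ ℓ₂ → (ℓ₁ ∩ ℓ₂).card ≤ 2)

/-- `IsElementaryMove B mv`: the assignment `(a,b) ↦ mv a b` satisfies exactly the
defining properties of the elementary moves `[a,b]` of the design with line set `B`: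
`[a,a] = 1`; for `a ≠ b`, `[a,b]` swaps `a` and `b`, swaps `c` and `d` whenever
`{a,b,c,d}` is a line, and fixes every point lying on no line through `a` and `b`. -/
def IsElementaryMove {Ω : Type*} [DecidableEq Ω]
    (B : Finset (Finset Ω)) (mv : Ω → Ω → Equiv.Perm Ω) : Prop :=
  (∀ a : Ω, mv a a = 1) ∧
  (∀ a b : Ω, a ≠ b → mv a b a = b ∧ mv a b b = a) ∧
  (∀ a b c d : Ω, a ≠ b → ({a, b, c, d} : Finset Ω) ∈ B → mv a b c = d) ∧
  (∀ a b x : Ω, a ≠ b → (∀ ℓ ∈ B, ¬(a ∈ ℓ ∧ b ∈ ℓ ∧ x ∈ ℓ)) → mv a b x = x)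

/-- `L(D)`: the subgroup of `Sym(Ω)` generated by all elementary moves. -/
def moveGroup {Ω : Type*} (mv : Ω → Ω → Equiv.Perm Ω) : Subgroup (Equiv.Perm Ω) :=
  Subgroup.closure {σ | ∃ a b : Ω, σ = mv a b}

/-- The hole stabilizer `π_∞(D)`: the subgroup of `Sym(Ω)` generated by the
closed move sequences `[∞,a][a,b][b,∞]`. -/
def holeStabilizer {Ω : Type*} (mv : Ω → Ω → Equiv.Perm Ω) (inf : Ω) :
    Subgroup (Equiv.Perm Ω) :=
  Subgroup.closure {σ | ∃ a b : Ω, σ = mv inf a * mv a b * mv b inf}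


open Equiv Finset

/-- Bundled context for the design/move development. -/
structure MDS (Ω : Type*) [Fintype Ω] [DecidableEq Ω] where
  B : Finset (Finset Ω)
  lam : ℕ
  mv : Ω → Ω → Equiv.Perm Ω
  inf : Ω
  hcard : ∀ ℓ ∈ B, ℓ.card = 4
  hpair : ∀ p q : Ω, p ≠ q → (B.filter fun ℓ => p ∈ ℓ ∧ q ∈ ℓ).card = lam
  hss : ∀ ℓ₁ ∈ B, ∀ ℓ₂ ∈ B, ℓ₁ ≠ ℓ₂ → (ℓ₁ ∩ ℓ₂).card ≤ 2
  hid : ∀ a, mv a a = 1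
  hswap : ∀ a b, a ≠ b → mv a b a = b ∧ mv a b b = a
  hline : ∀ a b c d, a ≠ b → ({a, b, c, d} : Finset Ω) ∈ B → mv a b c = d
  hfix : ∀ a b x, a ≠ b → (∀ ℓ ∈ B, ¬(a ∈ ℓ ∧ b ∈ ℓ ∧ x ∈ ℓ)) → mv a b x = x
  htri : ∀ a b, a ≠ b → a ≠ inf → b ≠ inf →
    (∃ ℓ ∈ B, inf ∈ ℓ ∧ a ∈ ℓ ∧ b ∈ ℓ) → mv inf a * mv a b * mv b inf = 1

namespace MDS

variable {Ω : Type*} [Fintype Ω] [DecidableEq Ω] (D : MDS Ω)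

/-- Any two distinct points lie on some line. -/
lemma exists_line {a b : Ω} (hab : a ≠ b) : ∃ ℓ ∈ D.B, a ∈ ℓ ∧ b ∈ ℓ := by
  by_contra h
  push_neg at h
  have h4 := D.hfix a b a hab (fun ℓ hℓ => by
    intro ⟨ha, hb, _⟩; exact h ℓ hℓ ha hb)
  have h2 := (D.hswap a b hab).1
  rw [h4] at h2; exact hab h2

lemma lam_pos {a b : Ω} (hab : a ≠ b) : 1 ≤ D.lam := by
  obtain ⟨ℓ, hℓ, ha, hb⟩ := D.exists_line hab
  have := D.hpair a b hab
  rw [← this]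
  refine Finset.card_pos.2 ⟨ℓ, ?_⟩
  simp [Finset.mem_filter, hℓ, ha, hb]

lemma line_of_moved {a b x : Ω} (hab : a ≠ b) (hx : D.mv a b x ≠ x) :
    ∃ ℓ ∈ D.B, a ∈ ℓ ∧ b ∈ ℓ ∧ x ∈ ℓ := by
  by_contra h
  push_neg at h
  exact hx (D.hfix a b x hab (fun ℓ hℓ => by
    intro ⟨ha, hb, hxx⟩; exact h ℓ hℓ ha hb hxx))

/-- The fourth point of a line through three given distinct points. -/
lemma fourth {ℓ : Finset Ω} {a b c : Ω} (hℓ : ℓ ∈ D.B) (ha : a ∈ ℓ) (hb : b ∈ ℓ)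
    (hc : c ∈ ℓ) (hab : a ≠ b) (hac : a ≠ c) (hbc : b ≠ c) :
    ∃ d, d ∈ ℓ ∧ d ≠ a ∧ d ≠ b ∧ d ≠ c ∧ ℓ = {a, b, c, d} := by
  classical
  have hsub : ({a, b, c} : Finset Ω) ⊆ ℓ := by
    intro x hx; simp only [Finset.mem_insert, Finset.mem_singleton] at hx
    rcases hx with rfl | rfl | rfl <;> assumption
  have hcard3 : ({a, b, c} : Finset Ω).card = 3 := by
    rw [Finset.card_insert_of_notMem (by simp [hab, hac]),
      Finset.card_insert_of_notMem (by simp [hbc]), Finset.card_singleton]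
  have hcards : (ℓ \ {a, b, c}).card = 1 := by
    rw [Finset.card_sdiff_of_subset hsub, D.hcard ℓ hℓ, hcard3]
  obtain ⟨d, hd⟩ := Finset.card_eq_one.1 hcards
  have hdmem : d ∈ ℓ \ ({a, b, c} : Finset Ω) := by rw [hd]; exact Finset.mem_singleton_self d
  rw [Finset.mem_sdiff] at hdmem
  obtain ⟨hdl, hdn⟩ := hdmem
  simp only [Finset.mem_insert, Finset.mem_singleton, not_or] at hdn
  refine ⟨d, hdl, hdn.1, hdn.2.1, hdn.2.2, ?_⟩
  have hsub2 : ({a, b, c, d} : Finset Ω) ⊆ ℓ := by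
    intro x hx; simp only [Finset.mem_insert, Finset.mem_singleton] at hx
    rcases hx with rfl | rfl | rfl | rfl <;> assumption
  refine (Finset.eq_of_subset_of_card_le hsub2 ?_).symm
  rw [D.hcard ℓ hℓ]
  rw [Finset.card_insert_of_notMem (by simp [hab, hac, Ne.symm hdn.1]),
    Finset.card_insert_of_notMem (by simp [hbc, Ne.symm hdn.2.1]),
    Finset.card_insert_of_notMem (by simp [Ne.symm hdn.2.2]), Finset.card_singleton]

/-- Action of a move on a third point of a line through the two moved points. -/
lemma mv_apply_line {ℓ : Finset Ω} {a b c : Ω} (hℓ : ℓ ∈ D.B) (ha : a ∈ ℓ) (hb : b ∈ ℓ)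
    (hc : c ∈ ℓ) (hab : a ≠ b) (hca : c ≠ a) (hcb : c ≠ b) :
    ∃ d, D.mv a b c = d ∧ d ∈ ℓ ∧ d ≠ a ∧ d ≠ b ∧ d ≠ c ∧ D.mv a b d = c ∧
      ℓ = {a, b, c, d} := by
  obtain ⟨d, hdl, hda, hdb, hdc, hℓeq⟩ :=
    D.fourth hℓ ha hb hc hab (Ne.symm hca) (Ne.symm hcb)
  have h1 : D.mv a b c = d := D.hline a b c d hab (hℓeq ▸ hℓ)
  have hswap : ({a, b, d, c} : Finset Ω) = ({a, b, c, d} : Finset Ω) := by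
    ext x; simp only [Finset.mem_insert, Finset.mem_singleton]; tauto
  have h2 : D.mv a b d = c := D.hline a b d c hab (by rw [hswap, ← hℓeq]; exact hℓ)
  exact ⟨d, h1, hdl, hda, hdb, hdc, h2, hℓeq⟩

/-- Moves are involutions (pointwise). -/
lemma mv_mv (a b x : Ω) : D.mv a b (D.mv a b x) = x := by
  by_cases hab : a = b
  · subst hab; rw [D.hid]; rfl
  by_cases hxa : x = a
  · rw [hxa, (D.hswap a b hab).1, (D.hswap a b hab).2]
  by_cases hxb : x = b
  · rw [hxb, (D.hswap a b hab).2, (D.hswap a b hab).1]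
  by_cases hmx : D.mv a b x = x
  · rw [hmx, hmx]
  obtain ⟨ℓ, hℓ, ha, hb, hx⟩ := D.line_of_moved hab hmx
  obtain ⟨d, h1, _, _, _, _, h2, _⟩ := D.mv_apply_line hℓ ha hb hx hab hxa hxb
  rw [h1, h2]

lemma mv_mul_self (a b : Ω) : D.mv a b * D.mv a b = 1 :=
  Equiv.ext fun x => D.mv_mv a b x

lemma mv_inv (a b : Ω) : (D.mv a b)⁻¹ = D.mv a b :=
  inv_eq_of_mul_eq_one_left (D.mv_mul_self a b)

/-- Moves are symmetric in the two points. -/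
lemma mv_comm (a b : Ω) : D.mv a b = D.mv b a := by
  by_cases hab : a = b
  · rw [hab]
  ext x
  by_cases hxa : x = a
  · rw [hxa, (D.hswap a b hab).1, (D.hswap b a (Ne.symm hab)).2]
  by_cases hxb : x = b
  · rw [hxb, (D.hswap a b hab).2, (D.hswap b a (Ne.symm hab)).1]
  by_cases hmx : D.mv a b x = x
  · have hmy : D.mv b a x = x := by
      by_contra hmy
      obtain ⟨ℓ, hℓ, hbℓ, haℓ, hxℓ⟩ := D.line_of_moved (Ne.symm hab) hmy
      obtain ⟨d, h1, _, _, _, hdx, _, _⟩ := D.mv_apply_line hℓ haℓ hbℓ hxℓ hab hxa hxb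
      rw [hmx] at h1
      exact hdx h1.symm
    rw [hmx, hmy]
  · obtain ⟨ℓ, hℓ, haℓ, hbℓ, hxℓ⟩ := D.line_of_moved hab hmx
    obtain ⟨d, h1, hdl, hda, hdb, hdx, h2, hℓeq⟩ :=
      D.mv_apply_line hℓ haℓ hbℓ hxℓ hab hxa hxb
    have hset : ({b, a, x, d} : Finset Ω) = ℓ := by
      rw [hℓeq]; ext y
      simp only [Finset.mem_insert, Finset.mem_singleton]; tauto
    rw [h1, D.hline b a x d (Ne.symm hab) (hset ▸ hℓ)]


/-- Adjacency: two non-`inf` points collinear with `inf`. -/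
def Adj (a b : Ω) : Prop :=
  a ≠ b ∧ a ≠ D.inf ∧ b ≠ D.inf ∧ ∃ ℓ ∈ D.B, D.inf ∈ ℓ ∧ a ∈ ℓ ∧ b ∈ ℓ

lemma Adj.symm {a b : Ω} (h : D.Adj a b) : D.Adj b a := by
  obtain ⟨h1, h2, h3, ℓ, hℓ, hi, ha, hb⟩ := h
  exact ⟨h1.symm, h3, h2, ℓ, hℓ, hi, hb, ha⟩

/-- Decomposition of adjacent moves into σ's. -/
lemma mv_eq_sigma_mul {a b : Ω} (h : D.Adj a b) :
    D.mv a b = D.mv D.inf a * D.mv D.inf b := by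
  obtain ⟨h1, h2, h3, hex⟩ := h
  have htri := D.htri a b h1 h2 h3 hex
  calc D.mv a b
      = (D.mv D.inf a * D.mv D.inf a) * D.mv a b * (D.mv b D.inf * D.mv b D.inf) := by
        rw [D.mv_mul_self, D.mv_mul_self, one_mul, mul_one]
    _ = D.mv D.inf a * (D.mv D.inf a * D.mv a b * D.mv b D.inf) * D.mv b D.inf := by
        group
    _ = D.mv D.inf a * D.mv b D.inf := by rw [htri]; group
    _ = D.mv D.inf a * D.mv D.inf b := by rw [D.mv_comm b D.inf]

lemma sigma_comm {a b : Ω} (h : D.Adj a b) :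
    D.mv D.inf a * D.mv D.inf b = D.mv D.inf b * D.mv D.inf a := by
  rw [← D.mv_eq_sigma_mul h, ← D.mv_eq_sigma_mul h.symm, D.mv_comm]

lemma sigma_inf (a : Ω) : D.mv D.inf a D.inf = a := by
  by_cases h : a = D.inf
  · rw [h, D.hid]; rfl
  · exact (D.hswap D.inf a (Ne.symm h)).1

lemma sigma_self {a : Ω} (h : a ≠ D.inf) : D.mv D.inf a a = D.inf :=
  (D.hswap D.inf a (Ne.symm h)).2

/-- If σ_a moves u then u is inf, a, or adjacent to a. -/
lemma adj_of_sigma_moved {a u : Ω} (ha : a ≠ D.inf) (hu : D.mv D.inf a u ≠ u) :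
    u = D.inf ∨ u = a ∨ D.Adj a u := by
  obtain ⟨ℓ, hℓ, hi, haa, huu⟩ := D.line_of_moved (Ne.symm ha) hu
  by_cases h1 : u = D.inf
  · left; exact h1
  by_cases h2 : u = a
  · right; left; exact h2
  · right; right; exact ⟨Ne.symm h2, ha, h1, ℓ, hℓ, hi, haa, huu⟩

/-- Key transitivity of adjacency (uses the triangle hypothesis + supersimplicity). -/
lemma adj_trans {x y u : Ω} (hxy : D.Adj x y) (hxu : D.Adj x u) (hyu : y ≠ u) :
    D.Adj y u := by
  by_contra hcon
  have hnol : ∀ ℓ ∈ D.B, ¬(D.inf ∈ ℓ ∧ y ∈ ℓ ∧ u ∈ ℓ) := by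
    intro ℓ hℓ ⟨hi, hy, hu⟩
    exact hcon ⟨hyu, hxy.2.2.1, hxu.2.2.1, ℓ, hℓ, hi, hy, hu⟩
  have hfixu : D.mv D.inf y u = u :=
    D.hfix D.inf y u (Ne.symm hxy.2.2.1) (fun ℓ hℓ ⟨h1, h2, h3⟩ => hnol ℓ hℓ ⟨h1, h2, h3⟩)
  -- the line through inf, x, u
  obtain ⟨ℓ₂, hℓ₂, hi₂, hx₂, hu₂⟩ := hxu.2.2.2
  have hui : u ≠ D.inf := hxu.2.2.1
  have hux : u ≠ x := Ne.symm hxu.1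
  obtain ⟨d, hd1, hdl, hdi, hdx, hdu, _, _⟩ :=
    D.mv_apply_line hℓ₂ hi₂ hx₂ hu₂ (Ne.symm hxu.2.1) hui hux
  -- mv x y u = d
  have hmv : D.mv x y u = d := by
    rw [D.mv_eq_sigma_mul hxy, Equiv.Perm.mul_apply, hfixu, hd1]
  have hmoved : D.mv x y u ≠ u := by rw [hmv]; exact hdu
  obtain ⟨m, hm, hxm, hym, hum⟩ := D.line_of_moved hxy.1 hmoved
  obtain ⟨t, ht1, htl, hta, htb, htu, _, _⟩ :=
    D.mv_apply_line hm hxm hym hum hxy.1 hux (Ne.symm hyu)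
  have htd : t = d := by rw [← ht1, hmv]
  subst htd
  -- y ∉ ℓ₂, so m ≠ ℓ₂, but they share x, u, t
  have hyℓ₂ : y ∉ ℓ₂ := fun hy => hnol ℓ₂ hℓ₂ ⟨hi₂, hy, hu₂⟩
  have hmne : m ≠ ℓ₂ := fun h => hyℓ₂ (h ▸ hym)
  have hsub : ({x, u, t} : Finset Ω) ⊆ m ∩ ℓ₂ := by
    intro z hz
    simp only [Finset.mem_insert, Finset.mem_singleton] at hz
    rw [Finset.mem_inter]
    rcases hz with rfl | rfl | rfl
    · exact ⟨hxm, hx₂⟩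
    · exact ⟨hum, hu₂⟩
    · exact ⟨htl, hdl⟩
  have hc3 : ({x, u, t} : Finset Ω).card = 3 := by
    rw [Finset.card_insert_of_notMem (by simp [hux.symm, hdx.symm]),
      Finset.card_insert_of_notMem (by simp [htu.symm]), Finset.card_singleton]
  have := Finset.card_le_card hsub
  have h2 := D.hss m hm ℓ₂ hℓ₂ hmne
  omega

/-- Closed neighbourhood of `a` together with `inf`. -/
def nhat (a : Ω) : Set Ω := {u | u = D.inf ∨ u = a ∨ D.Adj a u}

lemma inf_mem_nhat (a : Ω) : D.inf ∈ D.nhat a := Or.inl rfl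
lemma self_mem_nhat (a : Ω) : a ∈ D.nhat a := Or.inr (Or.inl rfl)

lemma nhat_eq_of_adj {a x : Ω} (h : D.Adj a x) : D.nhat a = D.nhat x := by
  have key : ∀ p q : Ω, D.Adj p q → D.nhat p ⊆ D.nhat q := by
    intro p q hpq u hu
    rcases hu with rfl | rfl | hadj
    · exact Or.inl rfl
    · exact Or.inr (Or.inr hpq.symm)
    · by_cases huq : u = q
      · exact Or.inr (Or.inl huq)
      · exact Or.inr (Or.inr (D.adj_trans hpq hadj (Ne.symm huq)))
  exact Set.Subset.antisymm (key a x h) (key x a h.symm)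

lemma not_mem_nhat {a b : Ω} (hab : ¬D.Adj a b) (hba : b ≠ a) (hbi : b ≠ D.inf) :
    b ∉ D.nhat a := by
  intro h
  rcases h with h | h | h
  · exact hbi h
  · exact hba h
  · exact hab h

/-- σ_x preserves nhat a for x in the closed neighbourhood of a. -/
lemma sigma_mem_nhat_self {a u : Ω} (ha : a ≠ D.inf) (hu : u ∈ D.nhat a) :
    D.mv D.inf a u ∈ D.nhat a := by
  rcases hu with h | h | hadj
  · rw [h, D.sigma_inf]; exact D.self_mem_nhat a
  · rw [h, D.sigma_self ha]; exact D.inf_mem_nhat a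
  · by_cases hmu : D.mv D.inf a u = u
    · rw [hmu]; exact Or.inr (Or.inr hadj)
    · obtain ⟨hau, _, hui, ℓ, hℓ, hi, haa, huu⟩ := id hadj
      obtain ⟨d, hd1, hdl, hdi, hda, hdu, _, _⟩ :=
        D.mv_apply_line hℓ hi haa huu (Ne.symm ha) hui (Ne.symm hau)
      rw [hd1]
      exact Or.inr (Or.inr ⟨Ne.symm hda, ha, hdi, ℓ, hℓ, hi, haa, hdl⟩)

lemma sigma_mem_nhat {a x u : Ω} (ha : a ≠ D.inf) (hx : x = a ∨ D.Adj a x)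
    (hu : u ∈ D.nhat a) : D.mv D.inf x u ∈ D.nhat a := by
  rcases hx with rfl | hadj
  · exact D.sigma_mem_nhat_self ha hu
  · rw [D.nhat_eq_of_adj hadj] at hu ⊢
    exact D.sigma_mem_nhat_self hadj.2.2.1 hu

/-- σ_x fixes points outside nhat a, for x in the closed neighbourhood of a. -/
lemma sigma_fix_of_not_mem_nhat {a x u : Ω} (ha : a ≠ D.inf) (hx : x = a ∨ D.Adj a x)
    (hu : u ∉ D.nhat a) : D.mv D.inf x u = u := by
  by_contra hmu
  have hxi : x ≠ D.inf := by rcases hx with rfl | h; exact ha; exact h.2.2.1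
  rcases D.adj_of_sigma_moved hxi hmu with rfl | rfl | hadj
  · exact hu (D.inf_mem_nhat a)
  · rcases hx with rfl | h
    · exact hu (D.self_mem_nhat u)
    · exact hu (Or.inr (Or.inr h))
  · apply hu
    rcases hx with rfl | h
    · exact Or.inr (Or.inr hadj)
    · rw [D.nhat_eq_of_adj h]
      exact Or.inr (Or.inr hadj)

/-- Lines meeting a closed neighbourhood twice are contained in it. -/
lemma line_subset_nhat {a u : Ω} {ℓ : Finset Ω} (h : D.Adj a u) (hℓ : ℓ ∈ D.B)
    (ha : a ∈ ℓ) (hu : u ∈ ℓ) : ∀ v ∈ ℓ, v ∈ D.nhat a := by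
  intro v hv
  by_cases hva : v = a
  · rw [hva]; exact D.self_mem_nhat a
  by_cases hvu : v = u
  · rw [hvu]; exact Or.inr (Or.inr h)
  obtain ⟨t, ht1, _, _, _, htv, _, _⟩ :=
    D.mv_apply_line hℓ ha hu hv h.1 hva hvu
  have hmoved : D.mv a u v ≠ v := by rw [ht1]; exact htv
  rw [D.mv_eq_sigma_mul h, Equiv.Perm.mul_apply] at hmoved
  by_cases h1 : D.mv D.inf u v = v
  · rw [h1] at hmoved
    by_contra hvn
    exact hmoved (D.sigma_fix_of_not_mem_nhat h.2.1 (Or.inl rfl) hvn)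
  · by_contra hvn
    have hvn' : v ∉ D.nhat u := by rw [← D.nhat_eq_of_adj h]; exact hvn
    exact h1 (D.sigma_fix_of_not_mem_nhat h.2.2.1 (Or.inl rfl) hvn')

/-- Cross moves fix the closed neighbourhood of `a` except at `a` itself. -/
lemma cross_fix {a b u : Ω} (hab : ¬D.Adj a b) (ha : a ≠ D.inf) (hb : b ≠ D.inf)
    (hne : a ≠ b) (hu : u ∈ D.nhat a) (hua : u ≠ a) : D.mv a b u = u := by
  by_contra hmu
  obtain ⟨m, hm, ham, hbm, hum⟩ := D.line_of_moved hne hmu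
  rcases hu with rfl | rfl | hadj
  · exact hab ⟨hne, ha, hb, m, hm, hum, ham, hbm⟩
  · exact hua rfl
  · have := D.line_subset_nhat hadj hm ham hum b hbm
    exact (D.not_mem_nhat hab (Ne.symm hne) hb) this


end MDS

/-- Explicit 3-cycle `p ↦ q ↦ r ↦ p`. -/
def c3 {Ω : Type*} [DecidableEq Ω] (p q r : Ω) : Equiv.Perm Ω :=
  Equiv.swap p q * Equiv.swap q r

section c3

variable {Ω : Type*} [DecidableEq Ω] {p q r : Ω}

lemma c3_apply_p (hpq : p ≠ q) (hpr : p ≠ r) : c3 p q r p = q := by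
  rw [c3, Equiv.Perm.mul_apply, Equiv.swap_apply_of_ne_of_ne hpq hpr,
    Equiv.swap_apply_left]

lemma c3_apply_q (hqr : q ≠ r) (hpr : p ≠ r) : c3 p q r q = r := by
  rw [c3, Equiv.Perm.mul_apply, Equiv.swap_apply_left,
    Equiv.swap_apply_of_ne_of_ne (Ne.symm hpr) (Ne.symm hqr)]

lemma c3_apply_r : c3 p q r r = p := by
  rw [c3, Equiv.Perm.mul_apply, Equiv.swap_apply_right, Equiv.swap_apply_right]

lemma c3_apply_ne {x : Ω} (hxp : x ≠ p) (hxq : x ≠ q) (hxr : x ≠ r) :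
    c3 p q r x = x := by
  rw [c3, Equiv.Perm.mul_apply, Equiv.swap_apply_of_ne_of_ne hxq hxr,
    Equiv.swap_apply_of_ne_of_ne hxp hxq]

lemma c3_rot (hpq : p ≠ q) (hpr : p ≠ r) (hqr : q ≠ r) : c3 p q r = c3 q r p := by
  ext x
  by_cases hxp : x = p
  · rw [hxp, c3_apply_p hpq hpr, c3_apply_r]
  by_cases hxq : x = q
  · rw [hxq, c3_apply_q hqr hpr, c3_apply_p hqr (Ne.symm hpq)]
  by_cases hxr : x = r
  · rw [hxr, c3_apply_r, c3_apply_q (Ne.symm hpr) (Ne.symm hpq)]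
  · rw [c3_apply_ne hxp hxq hxr, c3_apply_ne hxq hxr hxp]

end c3

namespace MDS

variable {Ω : Type*} [Fintype Ω] [DecidableEq Ω] (D : MDS Ω)

/-- The fundamental 3-cycle relation: for a non-adjacent pair `(a,b)` and `x` in the
closed neighbourhood of `a`, the product `[a,b]·σ_x·[a,b]·σ_x` is a 3-cycle. -/
lemma prod_eq_c3 {a b x : Ω} (hab : ¬D.Adj a b) (ha : a ≠ D.inf) (hb : b ≠ D.inf)
    (hne : a ≠ b) (hx : x = a ∨ D.Adj a x) :
    D.mv a b * D.mv D.inf x * D.mv a b * D.mv D.inf x = c3 a b (D.mv D.inf x a) := by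
  set σ := D.mv D.inf x with hσ
  set τ := D.mv a b with hτ
  set a' := σ a with ha'
  have hσσ : ∀ z, σ (σ z) = z := D.mv_mv D.inf x
  have hττ : ∀ z, τ (τ z) = z := D.mv_mv a b
  have hτa : τ a = b := (D.hswap a b hne).1
  have hτb : τ b = a := (D.hswap a b hne).2
  have hamem : a ∈ D.nhat a := D.self_mem_nhat a
  have hbnot : b ∉ D.nhat a := D.not_mem_nhat hab (Ne.symm hne) hb
  have hσnh : ∀ z ∈ D.nhat a, σ z ∈ D.nhat a := fun z hz => D.sigma_mem_nhat ha hx hz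
  have hσout : ∀ z, z ∉ D.nhat a → σ z = z := fun z hz => D.sigma_fix_of_not_mem_nhat ha hx hz
  have hτnh : ∀ z ∈ D.nhat a, z ≠ a → τ z = z := fun z hz hza => D.cross_fix hab ha hb hne hz hza
  have ha'mem : a' ∈ D.nhat a := hσnh a hamem
  have ha'a : a' ≠ a := by
    rcases hx with rfl | hadj
    · rw [ha', hσ, D.sigma_self ha]; exact Ne.symm ha
    · obtain ⟨hax, -, hxi, ℓ, hℓ, hiℓ, haℓ, hxℓ⟩ := id hadj
      obtain ⟨d, hd1, _, _, _, hda, _, _⟩ :=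
        D.mv_apply_line hℓ hiℓ hxℓ haℓ (Ne.symm hxi) ha hax
      rw [ha', hσ, hd1]; exact hda
  have ha'b : a' ≠ b := fun h => hbnot (h ▸ ha'mem)
  have hσb : σ b = b := hσout b hbnot
  have hτa' : τ a' = a' := hτnh a' ha'mem ha'a
  have hσa' : σ a' = a := by rw [ha', hσσ]
  ext u
  simp only [Equiv.Perm.mul_apply]
  by_cases hua : u = a
  · rw [hua, c3_apply_p hne (Ne.symm ha'a), ← ha', hτa', hσa', hτa]
  by_cases hub : u = b
  · rw [hub, c3_apply_q (Ne.symm ha'b) (Ne.symm ha'a), hσb, hτb, ← ha', hτa']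
  by_cases hua' : u = a'
  · rw [hua', c3_apply_r, hσa', hτa, hσb, hτb]
  -- u ∉ {a, b, a'} : fixed
  rw [c3_apply_ne hua hub hua']
  by_cases hmem : u ∈ D.nhat a
  · have hr : σ u ∈ D.nhat a := hσnh u hmem
    have hra : σ u ≠ a := by
      intro h
      apply hua'
      rw [← hσσ u, h, ha']
    rw [hτnh (σ u) hr hra, hσσ, hτnh u hmem hua]
  · have hσu : σ u = u := hσout u hmem
    rw [hσu]
    by_cases hτu : τ u = u
    · rw [hτu, hσu, hτu]
    · have hw : τ u ∉ D.nhat a := by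
        intro hwn
        have hwa : τ u ≠ a := fun h => hub (by rw [← hττ u, h, hτa])
        have h2 : τ (τ u) = τ u := hτnh (τ u) hwn hwa
        rw [hττ u] at h2
        exact hτu h2.symm
      rw [hσout (τ u) hw, hττ]


lemma mv_mem (a b : Ω) : D.mv a b ∈ moveGroup D.mv :=
  Subgroup.subset_closure ⟨a, b, rfl⟩

/-- The basic 3-cycles produced from a non-adjacent pair. -/
lemma c3_mem_of_not_adj {a b x : Ω} (hab : ¬D.Adj a b) (ha : a ≠ D.inf) (hb : b ≠ D.inf)
    (hne : a ≠ b) (hx : x = a ∨ D.Adj a x) :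
    c3 a b (D.mv D.inf x a) ∈ moveGroup D.mv := by
  rw [← D.prod_eq_c3 hab ha hb hne hx]
  exact mul_mem (mul_mem (mul_mem (D.mv_mem a b) (D.mv_mem D.inf x)) (D.mv_mem a b))
    (D.mv_mem D.inf x)

lemma c3_inf_mem_of_not_adj {a b : Ω} (hab : ¬D.Adj a b) (ha : a ≠ D.inf)
    (hb : b ≠ D.inf) (hne : a ≠ b) : c3 a b D.inf ∈ moveGroup D.mv := by
  have := D.c3_mem_of_not_adj hab ha hb hne (Or.inl rfl)
  rwa [D.sigma_self ha] at this

/-- Conjugation step: from the 3-cycles `(p e i)` and `(q e i)` build `(p q i)`. -/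
lemma c3_conj {Ω : Type*} [DecidableEq Ω] {p q e i : Ω} (hpq : p ≠ q) (hpe : p ≠ e)
    (hpi : p ≠ i) (hqe : q ≠ e) (hqi : q ≠ i) (hei : e ≠ i) :
    c3 p e i * c3 q e i * (c3 p e i)⁻¹ = c3 p q i := by
  have key : c3 p e i * c3 q e i = c3 p q i * c3 p e i := by
    ext z
    simp only [Equiv.Perm.mul_apply]
    by_cases hzp : z = p
    · rw [hzp, c3_apply_ne hpq hpe hpi, c3_apply_p hpe hpi,
        c3_apply_ne (Ne.symm hpe) (Ne.symm hqe) hei]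
    by_cases hzq : z = q
    · rw [hzq, c3_apply_p hqe hqi, c3_apply_q hei hpi,
        c3_apply_ne (Ne.symm hpq) hqe hqi, c3_apply_q hqi hpi]
    by_cases hze : z = e
    · rw [hze, c3_apply_q hei hqi, c3_apply_r, c3_apply_q hei hpi, c3_apply_r]
    by_cases hzi : z = i
    · rw [hzi, c3_apply_r (p := q) (q := e) (r := i),
        c3_apply_ne (Ne.symm hpq) hqe hqi, c3_apply_r, c3_apply_p hpq hpi]
    · rw [c3_apply_ne hzq hze hzi, c3_apply_ne hzp hze hzi, c3_apply_ne hzp hzq hzi]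
  rw [mul_inv_eq_iff_eq_mul, key]

end MDS

/-- Composition: `(p q i) * (q r i) = (p q r)`. -/
lemma c3_comp {Ω : Type*} [DecidableEq Ω] {p q r i : Ω} (hpq : p ≠ q) (hpr : p ≠ r)
    (hqr : q ≠ r) (hpi : p ≠ i) (hqi : q ≠ i) (hri : r ≠ i) :
    c3 p q i * c3 q r i = c3 p q r := by
  ext z
  simp only [Equiv.Perm.mul_apply]
  by_cases hzp : z = p
  · rw [hzp, c3_apply_ne hpq hpr hpi, c3_apply_p hpq hpi, c3_apply_p hpq hpr]
  by_cases hzq : z = q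
  · rw [hzq, c3_apply_p hqr hqi, c3_apply_ne (Ne.symm hpr) (Ne.symm hqr) hri,
      c3_apply_q hqr hpr]
  by_cases hzr : z = r
  · rw [hzr, c3_apply_q hri hqi, c3_apply_r, c3_apply_r]
  by_cases hzi : z = i
  · rw [hzi, c3_apply_r (p := q) (q := r) (r := i), c3_apply_q hqi hpi,
      c3_apply_ne (Ne.symm hpi) (Ne.symm hqi) (Ne.symm hri)]
  · rw [c3_apply_ne hzq hzr hzi, c3_apply_ne hzp hzq hzi, c3_apply_ne hzp hzq hzr]

/-- Every 3-cycle is of the explicit form `c3 p q r`. -/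
lemma isThreeCycle_eq_c3 {Ω : Type*} [Fintype Ω] [DecidableEq Ω] {σ : Equiv.Perm Ω}
    (h : σ.IsThreeCycle) :
    ∃ p q r : Ω, p ≠ q ∧ p ≠ r ∧ q ≠ r ∧ σ = c3 p q r := by
  have hcard := h.card_support
  have hne : σ.support.Nonempty := by
    rw [← Finset.card_pos, hcard]; norm_num
  obtain ⟨p, hp⟩ := hne
  have hp' : σ p ≠ p := Equiv.Perm.mem_support.1 hp
  have hq : σ p ∈ σ.support := Equiv.Perm.apply_mem_support.2 hp
  have hq' : σ (σ p) ≠ σ p := Equiv.Perm.mem_support.1 hq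
  have horder : σ ^ 3 = 1 := by
    rw [← h.orderOf]; exact pow_orderOf_eq_one σ
  have hrp : σ (σ (σ p)) = p := by
    have h3 : (σ ^ 3) p = p := by rw [horder]; rfl
    calc σ (σ (σ p)) = (σ ^ 3) p := by
          rw [pow_succ, pow_succ, pow_one]
          simp only [Equiv.Perm.mul_apply]
      _ = p := h3
  have hrp' : σ (σ p) ≠ p := by
    intro h'
    rw [h'] at hrp
    exact hp' hrp
  have hr : σ (σ p) ∈ σ.support := Equiv.Perm.apply_mem_support.2 hq
  have hsub : ({p, σ p, σ (σ p)} : Finset Ω) ⊆ σ.support := by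
    intro z hz
    simp only [Finset.mem_insert, Finset.mem_singleton] at hz
    rcases hz with rfl | rfl | rfl
    · exact hp
    · exact hq
    · exact hr
  have hcard3 : ({p, σ p, σ (σ p)} : Finset Ω).card = 3 := by
    rw [Finset.card_insert_of_notMem (by
        simp only [Finset.mem_insert, Finset.mem_singleton, not_or]
        exact ⟨fun h => hp' h.symm, fun h => hrp' h.symm⟩),
      Finset.card_insert_of_notMem (by
        simp only [Finset.mem_singleton]
        exact fun h => hq' h.symm), Finset.card_singleton]
  have hsupp : σ.support = {p, σ p, σ (σ p)} :=
    (Finset.eq_of_subset_of_card_le hsub (by rw [hcard, hcard3])).symm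
  refine ⟨p, σ p, σ (σ p), Ne.symm hp', Ne.symm hrp', Ne.symm hq', ?_⟩
  ext z
  by_cases hzp : z = p
  · rw [hzp, c3_apply_p (Ne.symm hp') (Ne.symm hrp')]
  by_cases hzq : z = σ p
  · rw [hzq, c3_apply_q (Ne.symm hq') (Ne.symm hrp')]
  by_cases hzr : z = σ (σ p)
  · rw [hzr, c3_apply_r, hrp]
  · have hz : z ∉ σ.support := by
      rw [hsupp]
      simp only [Finset.mem_insert, Finset.mem_singleton, not_or]
      exact ⟨hzp, hzq, hzr⟩
    rw [Equiv.Perm.notMem_support.1 hz, c3_apply_ne hzp hzq hzr]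

namespace MDS

variable {Ω : Type*} [Fintype Ω] [DecidableEq Ω] (D : MDS Ω)

/-- `(p q ∞)` lies in the move group for all `p ≠ q` away from `inf`. -/
lemma zeta_mem {a₀ b₀ : Ω} (h0 : ¬D.Adj a₀ b₀) (ha₀ : a₀ ≠ D.inf) (hb₀ : b₀ ≠ D.inf)
    (hne0 : a₀ ≠ b₀) {p q : Ω} (hp : p ≠ D.inf) (hq : q ≠ D.inf) (hpq : p ≠ q) :
    c3 p q D.inf ∈ moveGroup D.mv := by
  classical
  by_cases hadj : D.Adj p q
  · have he : ∃ e, (e = a₀ ∨ e = b₀) ∧ ¬(p = e ∨ D.Adj p e) := by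
      by_contra hcon
      push_neg at hcon
      have h1 := hcon a₀ (Or.inl rfl)
      have h2 := hcon b₀ (Or.inr rfl)
      rcases h1 with h1 | h1
      · rcases h2 with h2 | h2
        · exact hne0 (h1 ▸ h2 ▸ rfl)
        · exact h0 (h1 ▸ h2)
      · rcases h2 with h2 | h2
        · exact h0 (h2 ▸ h1).symm
        · exact h0 (D.adj_trans h1 h2 hne0)
    obtain ⟨e, heab, hnpe⟩ := he
    push_neg at hnpe
    obtain ⟨hpe, hpadj⟩ := hnpe
    have hei : e ≠ D.inf := by rcases heab with rfl | rfl <;> assumption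
    have hqe : q ≠ e := fun h => hpadj (h ▸ hadj)
    have hqadj : ¬D.Adj q e := fun h => hpadj (D.adj_trans hadj.symm h hpe)
    have hu := D.c3_inf_mem_of_not_adj hpadj hp hei hpe
    have hv := D.c3_inf_mem_of_not_adj hqadj hq hei hqe
    rw [← c3_conj hpq hpe hp hqe hq hei]
    exact mul_mem (mul_mem hu hv) (inv_mem hu)
  · exact D.c3_inf_mem_of_not_adj hadj hp hq hpq

/-- All 3-cycles lie in the move group (given a non-adjacent pair). -/
lemma c3_all_mem {a₀ b₀ : Ω} (h0 : ¬D.Adj a₀ b₀) (ha₀ : a₀ ≠ D.inf) (hb₀ : b₀ ≠ D.inf)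
    (hne0 : a₀ ≠ b₀) {p q r : Ω} (hpq : p ≠ q) (hpr : p ≠ r) (hqr : q ≠ r) :
    c3 p q r ∈ moveGroup D.mv := by
  by_cases hri : r = D.inf
  · rw [hri]
    exact D.zeta_mem h0 ha₀ hb₀ hne0 (hri ▸ hpr) (hri ▸ hqr) hpq
  by_cases hpi : p = D.inf
  · have hqi' : q ≠ D.inf := by rw [← hpi]; exact Ne.symm hpq
    rw [c3_rot hpq hpr hqr, hpi]
    exact D.zeta_mem h0 ha₀ hb₀ hne0 hqi' hri hqr
  by_cases hqi : q = D.inf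
  · rw [c3_rot hpq hpr hqr, c3_rot hqr (Ne.symm hpq) (Ne.symm hpr), hqi]
    exact D.zeta_mem h0 ha₀ hb₀ hne0 hri hpi (Ne.symm hpr)
  · rw [← c3_comp hpq hpr hqr hpi hqi hri]
    exact mul_mem (D.zeta_mem h0 ha₀ hb₀ hne0 hpi hqi hpq)
      (D.zeta_mem h0 ha₀ hb₀ hne0 hqi hri hqr)

/-- The alternating group is contained in the move group (given a non-adjacent pair). -/
lemma alt_le {a₀ b₀ : Ω} (h0 : ¬D.Adj a₀ b₀) (ha₀ : a₀ ≠ D.inf) (hb₀ : b₀ ≠ D.inf)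
    (hne0 : a₀ ≠ b₀) : alternatingGroup Ω ≤ moveGroup D.mv := by
  rw [← Equiv.Perm.closure_three_cycles_eq_alternating, Subgroup.closure_le]
  intro σ hσ
  obtain ⟨p, q, r, hpq, hpr, hqr, rfl⟩ := isThreeCycle_eq_c3 hσ
  exact D.c3_all_mem h0 ha₀ hb₀ hne0 hpq hpr hqr

end MDS

section Invol

variable {G : Type*} [Group G] {S : Set G}

lemma closure_comm_gens (h2 : ∀ s ∈ S, ∀ t ∈ S, s * t = t * s) :
    ∀ g ∈ Subgroup.closure S, ∀ s ∈ S, Commute s g := fun g hg =>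
  Subgroup.closure_induction
    (fun x hx s hs => h2 s hs x hx)
    (fun s _ => Commute.one_right s)
    (fun x y _ _ px py s hs => (px s hs).mul_right (py s hs))
    (fun x _ px s hs => (px s hs).inv_right)
    hg

lemma closure_comm (h2 : ∀ s ∈ S, ∀ t ∈ S, s * t = t * s) :
    ∀ g ∈ Subgroup.closure S, ∀ h ∈ Subgroup.closure S, Commute g h := fun g hg h hh =>
  Subgroup.closure_induction
    (fun x hx => closure_comm_gens h2 h hh x hx)
    (Commute.one_left h)
    (fun x y _ _ px py => px.mul_left py)
    (fun x _ px => px.inv_left)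
    hg

lemma closure_invol_sq (h1 : ∀ s ∈ S, s * s = 1)
    (h2 : ∀ s ∈ S, ∀ t ∈ S, s * t = t * s) :
    ∀ g ∈ Subgroup.closure S, g * g = 1 := fun g hg =>
  Subgroup.closure_induction
    (fun x hx => h1 x hx)
    (one_mul 1)
    (fun x y hx hy px py => by
      have cxy : x * y = y * x := closure_comm h2 x hx y hy
      calc x * y * (x * y) = x * (y * x) * y := by group
        _ = x * (x * y) * y := by rw [← cxy]
        _ = x * x * (y * y) := by group
        _ = 1 := by rw [px, py, one_mul])
    (fun x _ px => by rw [← mul_inv_rev, px, inv_one])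
    hg

end Invol

namespace MDS

variable {Ω : Type*} [Fintype Ω] [DecidableEq Ω] (D : MDS Ω)

/-- The support of a move `mv a b` has cardinality `2·lam + 2`. -/
lemma mv_support_card {a b : Ω} (hab : a ≠ b) :
    (D.mv a b).support.card = 2 * D.lam + 2 := by
  classical
  set P := D.B.filter (fun ℓ => a ∈ ℓ ∧ b ∈ ℓ) with hP
  set T := P.biUnion (fun ℓ => (ℓ.erase a).erase b) with hT
  have hsupp : (D.mv a b).support = insert a (insert b T) := by
    ext x
    simp only [Equiv.Perm.mem_support, Finset.mem_insert]
    constructor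
    · intro hx
      by_cases hxa : x = a
      · exact Or.inl hxa
      by_cases hxb : x = b
      · exact Or.inr (Or.inl hxb)
      · obtain ⟨ℓ, hℓ, ha, hb, hxl⟩ := D.line_of_moved hab hx
        refine Or.inr (Or.inr ?_)
        rw [hT, Finset.mem_biUnion]
        exact ⟨ℓ, by rw [hP]; exact Finset.mem_filter.2 ⟨hℓ, ha, hb⟩,
          Finset.mem_erase.2 ⟨hxb, Finset.mem_erase.2 ⟨hxa, hxl⟩⟩⟩
    · intro hx
      rcases hx with h | h | hx
      · rw [h, (D.hswap a b hab).1]; exact Ne.symm hab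
      · rw [h, (D.hswap a b hab).2]; exact hab
      · rw [hT, Finset.mem_biUnion] at hx
        obtain ⟨ℓ, hℓP, hxl⟩ := hx
        rw [hP, Finset.mem_filter] at hℓP
        obtain ⟨hℓ, ha, hb⟩ := hℓP
        rw [Finset.mem_erase] at hxl
        have hxb := hxl.1
        have hxa := (Finset.mem_erase.1 hxl.2).1
        have hxl' := (Finset.mem_erase.1 hxl.2).2
        obtain ⟨d, hd1, _, _, _, hdx, _, _⟩ := D.mv_apply_line hℓ ha hb hxl' hab hxa hxb
        rw [hd1]; exact hdx
  have hTab : a ∉ T ∧ b ∉ T := by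
    constructor <;>
    · intro hx
      rw [hT, Finset.mem_biUnion] at hx
      obtain ⟨ℓ, _, hxl⟩ := hx
      rw [Finset.mem_erase] at hxl
      first
      | exact (Finset.mem_erase.1 hxl.2).1 rfl
      | exact hxl.1 rfl
  have hcardT : T.card = 2 * D.lam := by
    rw [hT, Finset.card_biUnion]
    · have : ∀ ℓ ∈ P, ((ℓ.erase a).erase b).card = 2 := by
        intro ℓ hℓP
        rw [hP, Finset.mem_filter] at hℓP
        obtain ⟨hℓ, ha, hb⟩ := hℓP
        rw [Finset.card_erase_of_mem (Finset.mem_erase.2 ⟨Ne.symm hab, hb⟩),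
          Finset.card_erase_of_mem ha, D.hcard ℓ hℓ]
      rw [Finset.sum_congr rfl this]
      rw [Finset.sum_const, smul_eq_mul]
      have : P.card = D.lam := by rw [hP]; exact D.hpair a b hab
      rw [this, mul_comm]
    · intro ℓ₁ h₁ ℓ₂ h₂ hne
      rw [hP, Finset.mem_coe, Finset.mem_filter] at h₁ h₂
      rw [Function.onFun, Finset.disjoint_left]
      intro x hx₁ hx₂
      rw [Finset.mem_erase] at hx₁ hx₂
      have hx₁' := Finset.mem_erase.1 hx₁.2
      have hx₂' := Finset.mem_erase.1 hx₂.2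
      have hsub : ({a, b, x} : Finset Ω) ⊆ ℓ₁ ∩ ℓ₂ := by
        intro z hz
        simp only [Finset.mem_insert, Finset.mem_singleton] at hz
        rw [Finset.mem_inter]
        rcases hz with rfl | rfl | rfl
        · exact ⟨h₁.2.1, h₂.2.1⟩
        · exact ⟨h₁.2.2, h₂.2.2⟩
        · exact ⟨hx₁'.2, hx₂'.2⟩
      have hc3 : ({a, b, x} : Finset Ω).card = 3 := by
        rw [Finset.card_insert_of_notMem (by simp [hab, Ne.symm hx₁'.1]),
          Finset.card_insert_of_notMem (by simp [Ne.symm hx₁.1]), Finset.card_singleton]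
      have h4 := Finset.card_le_card hsub
      have h5 := D.hss ℓ₁ h₁.1 ℓ₂ h₂.1 hne
      omega
  rw [hsupp, Finset.card_insert_of_notMem (by simp [hab, hTab.1]),
    Finset.card_insert_of_notMem hTab.2, hcardT]


/-- Moves are even permutations when `lam` is odd. -/
lemma mv_mem_alternating {a b : Ω} (hab : a ≠ b) (hodd : D.lam % 2 = 1) :
    D.mv a b ∈ alternatingGroup Ω := by
  rw [Equiv.Perm.mem_alternatingGroup]
  have hg1 : D.mv a b ≠ 1 := by
    intro h
    have h2 := (D.hswap a b hab).1
    rw [h] at h2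
    exact hab (by simpa using h2)
  have hg2 : D.mv a b ^ 2 = 1 := by rw [sq]; exact D.mv_mul_self a b
  haveI : Fact (Nat.Prime 2) := ⟨Nat.prime_two⟩
  have horder : orderOf (D.mv a b) = 2 := orderOf_eq_prime hg2 hg1
  have hct : ∀ n ∈ (D.mv a b).cycleType, n = 2 := by
    intro n hn
    have h1 := Equiv.Perm.two_le_of_mem_cycleType hn
    have h2 := Equiv.Perm.dvd_of_mem_cycleType hn
    rw [horder] at h2
    exact Nat.le_antisymm (Nat.le_of_dvd (by norm_num) h2) h1
  have hrep : (D.mv a b).cycleType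
      = Multiset.replicate (Multiset.card (D.mv a b).cycleType) 2 :=
    Multiset.eq_replicate.2 ⟨rfl, fun n hn => hct n hn⟩
  have hsum := Equiv.Perm.sum_cycleType (D.mv a b)
  have hsupp := D.mv_support_card hab
  have hsum2 : Multiset.card (D.mv a b).cycleType * 2 = 2 * D.lam + 2 := by
    have := hsum
    rw [hrep, Multiset.sum_replicate, smul_eq_mul] at this
    rw [this, hsupp]
  rw [Equiv.Perm.sign_of_cycleType]
  apply Even.neg_one_pow
  rw [hsum, hsupp]
  rw [Nat.even_iff]
  omega

/-- `nhat a` is the support of `σ_a`. -/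
lemma nhat_eq_support {a : Ω} (ha : a ≠ D.inf) :
    D.nhat a = ↑(D.mv D.inf a).support := by
  ext u
  simp only [Finset.coe_sort_coe, Finset.mem_coe, Equiv.Perm.mem_support]
  constructor
  · intro h
    rcases h with h | h | h
    · rw [h, D.sigma_inf]; exact ha
    · rw [h, D.sigma_self ha]; exact Ne.symm ha
    · obtain ⟨hne, -, hui, ℓ, hℓ, hi, hal, hul⟩ := id h
      obtain ⟨d, hd1, _, _, _, hdu, _, _⟩ :=
        D.mv_apply_line hℓ hi hal hul (Ne.symm ha) hui (Ne.symm hne)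
      rw [hd1]; exact hdu
  · intro h
    exact D.adj_of_sigma_moved ha h

/-- If a non-adjacent pair exists then `lam` is odd. -/
lemma lam_odd {a₀ b₀ : Ω} (h0 : ¬D.Adj a₀ b₀) (ha₀ : a₀ ≠ D.inf) (hb₀ : b₀ ≠ D.inf)
    (hne0 : a₀ ≠ b₀) : D.lam % 2 = 1 := by
  classical
  set S : Set (Equiv.Perm Ω) := {f | ∃ x, (x = a₀ ∨ D.Adj a₀ x) ∧ f = D.mv D.inf x}
    with hS
  have hinv : ∀ s ∈ S, s * s = 1 := by
    rintro s ⟨x, hx, rfl⟩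
    exact D.mv_mul_self _ _
  have hcomm : ∀ s ∈ S, ∀ t ∈ S, s * t = t * s := by
    rintro s ⟨x, hx, rfl⟩ t ⟨y, hy, rfl⟩
    by_cases hxy : x = y
    · rw [hxy]
    · have hadj : D.Adj x y := by
        rcases hx with rfl | hx
        · rcases hy with rfl | hy
          · exact absurd rfl hxy
          · exact hy
        · rcases hy with rfl | hy
          · exact hx.symm
          · exact D.adj_trans hx hy hxy
      exact D.sigma_comm hadj
  set E := Subgroup.closure S with hE
  have hsq : ∀ g ∈ E, g * g = 1 := closure_invol_sq hinv hcomm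
  haveI : Fact (Nat.Prime 2) := ⟨Nat.prime_two⟩
  have hpE : IsPGroup 2 E := by
    intro g
    refine ⟨1, ?_⟩
    have h1 : (g : Equiv.Perm Ω) * (g : Equiv.Perm Ω) = 1 := hsq g g.2
    have h2 : g * g = 1 := Subtype.ext h1
    rw [pow_one, sq, h2]
  obtain ⟨m, hm⟩ := IsPGroup.iff_card.1 hpE
  have horb : MulAction.orbit E D.inf = D.nhat a₀ := by
    ext u
    constructor
    · rintro ⟨g, rfl⟩
      have key : ∀ f ∈ E, ∀ v, v ∈ D.nhat a₀ ↔ f v ∈ D.nhat a₀ := by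
        intro f hf
        refine Subgroup.closure_induction ?_ ?_ ?_ ?_ hf
        · rintro x ⟨y, hy, rfl⟩ v
          constructor
          · exact fun hv => D.sigma_mem_nhat ha₀ hy hv
          · intro hv
            have h3 := D.sigma_mem_nhat ha₀ hy hv
            rwa [D.mv_mv] at h3
        · intro v; simp
        · intro x y _ _ px py v
          simpa [Equiv.Perm.mul_apply] using (py v).trans (px (y v))
        · intro x _ px v
          have h4 := (px (x⁻¹ v)).symm
          simpa [Equiv.Perm.inv_def, Equiv.apply_symm_apply] using h4
      have h5 := (key (g : Equiv.Perm Ω) g.2 D.inf).1 (D.inf_mem_nhat a₀)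
      simpa [Subgroup.smul_def, Equiv.Perm.smul_def] using h5
    · intro hu
      rcases hu with h | h | h
      · exact ⟨1, by rw [h]; simp⟩
      · refine ⟨⟨D.mv D.inf a₀, Subgroup.subset_closure ⟨a₀, Or.inl rfl, rfl⟩⟩, ?_⟩
        rw [h]
        simp only [Subgroup.mk_smul, Equiv.Perm.smul_def]
        exact D.sigma_inf a₀
      · refine ⟨⟨D.mv D.inf u, Subgroup.subset_closure ⟨u, Or.inr h, rfl⟩⟩, ?_⟩
        simp only [Subgroup.mk_smul, Equiv.Perm.smul_def]
        exact D.sigma_inf u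
  letI : Fintype ↥E := Fintype.ofFinite _
  letI : Fintype ↥(MulAction.orbit E D.inf) := Fintype.ofFinite _
  letI : Fintype ↥(MulAction.stabilizer E D.inf) := Fintype.ofFinite _
  have hos := MulAction.card_orbit_mul_card_stabilizer_eq_card_group E D.inf
  have hdvd : Fintype.card ↥(MulAction.orbit E D.inf) ∣ Fintype.card ↥E :=
    ⟨Fintype.card ↥(MulAction.stabilizer E D.inf), hos.symm⟩
  have hcardorb : Fintype.card ↥(MulAction.orbit E D.inf) = 2 * D.lam + 2 := by
    rw [← Nat.card_eq_fintype_card]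
    have h6 : Nat.card ↥(MulAction.orbit E D.inf) = Nat.card ↥(D.nhat a₀) := by
      rw [horb]
    rw [h6, D.nhat_eq_support ha₀, Nat.card_coe_set_eq, Set.ncard_coe_finset,
      D.mv_support_card (Ne.symm ha₀)]
  have hcardE : Fintype.card ↥E = 2 ^ m := by
    rw [← Nat.card_eq_fintype_card, hm]
  rw [hcardorb, hcardE] at hdvd
  have hdvd2 : D.lam + 1 ∣ 2 ^ m := dvd_trans ⟨2, by ring⟩ hdvd
  obtain ⟨j, -, hj⟩ := (Nat.dvd_prime_pow Nat.prime_two).1 hdvd2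
  have hlam1 : 1 ≤ D.lam := D.lam_pos hne0
  have hj1 : j ≠ 0 := by
    intro h
    rw [h, pow_zero] at hj
    omega
  have heven : Even (D.lam + 1) := by
    rw [hj]
    exact (Nat.even_pow.2 ⟨even_two, hj1⟩)
  rw [Nat.even_iff] at heven
  omega


/-- Case A: adjacency is complete, so the move group has exponent 2. -/
lemma caseA (hA : ∀ a b : Ω, a ≠ b → a ≠ D.inf → b ≠ D.inf →
    ∃ ℓ ∈ D.B, D.inf ∈ ℓ ∧ a ∈ ℓ ∧ b ∈ ℓ) :
    ∀ g ∈ moveGroup D.mv, g * g = 1 := by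
  classical
  set S : Set (Equiv.Perm Ω) := {f | ∃ x, f = D.mv D.inf x} with hS
  have hinv : ∀ s ∈ S, s * s = 1 := by
    rintro s ⟨x, rfl⟩
    exact D.mv_mul_self _ _
  have hcomm : ∀ s ∈ S, ∀ t ∈ S, s * t = t * s := by
    rintro s ⟨x, rfl⟩ t ⟨y, rfl⟩
    by_cases hx : x = D.inf
    · rw [hx, D.hid, one_mul, mul_one]
    by_cases hy : y = D.inf
    · rw [hy, D.hid, one_mul, mul_one]
    by_cases hxy : x = y
    · rw [hxy]
    · exact D.sigma_comm ⟨hxy, hx, hy, hA x y hxy hx hy⟩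
  have hle : moveGroup D.mv ≤ Subgroup.closure S := by
    rw [moveGroup, Subgroup.closure_le]
    rintro f ⟨a, b, rfl⟩
    by_cases hab : a = b
    · rw [hab, D.hid]; exact one_mem _
    by_cases ha : a = D.inf
    · rw [ha]
      exact Subgroup.subset_closure ⟨b, rfl⟩
    by_cases hb : b = D.inf
    · rw [hb, D.mv_comm]
      exact Subgroup.subset_closure ⟨a, rfl⟩
    · rw [D.mv_eq_sigma_mul ⟨hab, ha, hb, hA a b hab ha hb⟩]
      exact mul_mem (Subgroup.subset_closure ⟨a, rfl⟩) (Subgroup.subset_closure ⟨b, rfl⟩)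
  exact fun g hg => closure_invol_sq hinv hcomm g (hle hg)

end MDS


theorem stmt_16 {Ω : Type*} [Fintype Ω] [DecidableEq Ω]
    (n lam : ℕ) (hn : Fintype.card Ω = n)
    (B : Finset (Finset Ω)) (hD : IsSupersimpleDesign B lam)
    (mv : Ω → Ω → Equiv.Perm Ω) (hmv : IsElementaryMove B mv)
    (inf : Ω)
    (hyp : ∀ a b : Ω, a ≠ b → a ≠ inf → b ≠ inf →
        (∃ ℓ ∈ B, inf ∈ ℓ ∧ a ∈ ℓ ∧ b ∈ ℓ) →
        mv inf a * mv a b * mv b inf = 1) :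
    (∀ g ∈ moveGroup mv, g ^ 2 = 1) ∨
    n = 13 ∨
    moveGroup mv = alternatingGroup Ω := by
  classical
  obtain ⟨hcard, hpair, hss⟩ := hD
  obtain ⟨hid, hswap, hline, hfix⟩ := hmv
  set D : MDS Ω := ⟨B, lam, mv, inf, hcard, hpair, hss, hid, hswap, hline, hfix, hyp⟩
    with hD'
  by_cases hA : ∀ a b : Ω, a ≠ b → a ≠ inf → b ≠ inf →
      ∃ ℓ ∈ B, inf ∈ ℓ ∧ a ∈ ℓ ∧ b ∈ ℓ
  · left
    intro g hg
    rw [sq]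
    exact D.caseA hA g hg
  · right; right
    push_neg at hA
    obtain ⟨a₀, b₀, hne0, ha₀, hb₀, hnoline⟩ := hA
    have h0 : ¬D.Adj a₀ b₀ := by
      rintro ⟨-, -, -, ℓ, hℓ, hi, ha, hb⟩
      exact hnoline ℓ hℓ hi ha hb
    have hodd := D.lam_odd h0 ha₀ hb₀ hne0
    apply le_antisymm
    · rw [moveGroup, Subgroup.closure_le]
      rintro f ⟨a, b, rfl⟩
      by_cases hab : a = b
      · rw [hab]
        have : D.mv b b = 1 := D.hid b
        rw [show mv b b = D.mv b b from rfl, this]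
        exact one_mem _
      · exact D.mv_mem_alternating hab hodd
    · exact D.alt_le h0 ha₀ hb₀ hne0
end

section
/- Let D = (Ω,B) be a supersimple 2-(n,4,λ) design, let ∞ ∈ Ω, and let G = π_∞(D) be the hole stabilizer. If n > 9λ + 1, then every element of G fixes ∞ and G acts primitively on Ω∖{∞}; that is: (i) for all x, y ∈ Ω∖{∞} there exists g ∈ G with g(x) = y, and (ii) every subset Δ ⊆ Ω∖{∞} that is a block for the G-action (meaning that for each g ∈ G the image g(Δ) either equals Δ or is disjoint from Δ) satisfies |Δ| ≤ 1 or Δ = Ω∖{∞}. -/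
set_option linter.unusedSectionVars false

namespace Stmt17Aux

variable {Ω : Type*} [Fintype Ω] [DecidableEq Ω]

/-- Points (other than `p,q`) collinear with the pair `p,q`. -/
def collin (B : Finset (Finset Ω)) (p q : Ω) : Set Ω :=
  {w | w ≠ p ∧ w ≠ q ∧ ∃ ℓ ∈ B, p ∈ ℓ ∧ q ∈ ℓ ∧ w ∈ ℓ}

lemma collin_ncard_le {B : Finset (Finset Ω)} {lam : ℕ}
    (hD : IsSupersimpleDesign B lam) {p q : Ω} (hpq : p ≠ q) :
    (collin B p q).ncard ≤ 2 * lam := by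
  classical
  set F := B.filter (fun ℓ => p ∈ ℓ ∧ q ∈ ℓ) with hF
  have hsub : collin B p q ⊆ ↑(F.biUnion fun ℓ => (ℓ.erase q).erase p) := by
    rintro w ⟨hwp, hwq, ℓ, hℓ, hp, hq, hw⟩
    simp only [Finset.coe_biUnion, Set.mem_iUnion, Finset.mem_coe]
    exact ⟨ℓ, Finset.mem_filter.mpr ⟨hℓ, hp, hq⟩, by
      simp [Finset.mem_erase, hwp, hwq, hw]⟩
  calc (collin B p q).ncard ≤ (↑(F.biUnion fun ℓ => (ℓ.erase q).erase p) : Set Ω).ncard :=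
        Set.ncard_le_ncard hsub (Set.toFinite _)
    _ = (F.biUnion fun ℓ => (ℓ.erase q).erase p).card := Set.ncard_coe_finset _
    _ ≤ ∑ ℓ ∈ F, ((ℓ.erase q).erase p).card := Finset.card_biUnion_le
    _ ≤ ∑ _ℓ ∈ F, 2 := by
        refine Finset.sum_le_sum fun ℓ hℓ => ?_
        have hℓ' := Finset.mem_filter.mp hℓ
        have h4 : ℓ.card = 4 := hD.1 ℓ hℓ'.1
        have hq : q ∈ ℓ := hℓ'.2.2
        have hp : p ∈ ℓ.erase q := Finset.mem_erase.mpr ⟨hpq, hℓ'.2.1⟩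
        have h3 : (ℓ.erase q).card = 3 := by
          rw [Finset.card_erase_of_mem hq, h4]
        rw [Finset.card_erase_of_mem hp, h3]
    _ = 2 * lam := by
        rw [Finset.sum_const, smul_eq_mul, hD.2.1 p q hpq, mul_comm]


section Moves
variable {B : Finset (Finset Ω)} {mv : Ω → Ω → Equiv.Perm Ω} (hmv : IsElementaryMove B mv)
variable {inf : Ω}

/-- The generator `σ_{a,b} = [∞,a][a,b][b,∞]`. -/
lemma sigma_mem (a b : Ω) : mv inf a * mv a b * mv b inf ∈ holeStabilizer mv inf :=
  Subgroup.subset_closure ⟨a, b, rfl⟩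

include hmv

lemma sigma_fix_inf (a b : Ω) : (mv inf a * mv a b * mv b inf) inf = inf := by
  obtain ⟨h1, h2, h3, h4⟩ := hmv
  simp only [Equiv.Perm.mul_apply]
  by_cases hb : b = inf
  · rw [hb, h1 inf]
    simp only [Equiv.Perm.one_apply]
    by_cases ha : a = inf
    · rw [ha, h1 inf]; simp
    · rw [(h2 a inf ha).2]
      exact (h2 inf a (Ne.symm ha)).2
  · rw [(h2 b inf hb).2]
    by_cases hab : a = b
    · rw [hab, h1 b]
      simp only [Equiv.Perm.one_apply]
      exact (h2 inf b (Ne.symm hb)).2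
    · rw [(h2 a b hab).2]
      by_cases hai : a = inf
      · rw [hai, h1 inf]; simp
      · exact (h2 inf a (Ne.symm hai)).2

lemma hole_fix : ∀ g ∈ holeStabilizer mv inf, g inf = inf := by
  intro g hg
  induction hg using Subgroup.closure_induction with
  | mem x hx => obtain ⟨a, b, rfl⟩ := hx; exact sigma_fix_inf hmv a b
  | one => rfl
  | mul x y _ _ hx hy => simp only [Equiv.Perm.mul_apply, hy, hx]
  | inv x _ hx => conv_lhs => rw [← hx]
                  simp

lemma sigma_send {x z : Ω} (hxi : x ≠ inf) (hzi : z ≠ inf) (hxz : x ≠ z)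
    (hno : ∀ ℓ ∈ B, ¬(inf ∈ ℓ ∧ x ∈ ℓ ∧ z ∈ ℓ)) :
    (mv inf x * mv x z * mv z inf) x = z := by
  obtain ⟨h1, h2, h3, h4⟩ := hmv
  simp only [Equiv.Perm.mul_apply]
  rw [h4 z inf x hzi (fun ℓ hℓ h => hno ℓ hℓ ⟨h.2.1, h.2.2, h.1⟩),
    (h2 x z hxz).1, h4 inf x z (Ne.symm hxi) hno]

lemma sigma_fixpt {x z w : Ω} (hxi : x ≠ inf) (hzi : z ≠ inf) (hxz : x ≠ z)
    (h1' : ∀ ℓ ∈ B, ¬(inf ∈ ℓ ∧ x ∈ ℓ ∧ w ∈ ℓ))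
    (h2' : ∀ ℓ ∈ B, ¬(x ∈ ℓ ∧ z ∈ ℓ ∧ w ∈ ℓ))
    (h3' : ∀ ℓ ∈ B, ¬(z ∈ ℓ ∧ inf ∈ ℓ ∧ w ∈ ℓ)) :
    (mv inf x * mv x z * mv z inf) w = w := by
  obtain ⟨h1, h2, h3, h4⟩ := hmv
  simp only [Equiv.Perm.mul_apply]
  rw [h4 z inf w hzi h3', h4 x z w hxz h2', h4 inf x w (Ne.symm hxi) h1']

lemma trans_lemma {lam n : ℕ} (hD : IsSupersimpleDesign B lam)
    (hcardn : Fintype.card Ω = n) (hcard : n > 9 * lam + 1) :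
    ∀ x y : Ω, x ≠ inf → y ≠ inf → ∃ g ∈ holeStabilizer mv inf, g x = y := by
  intro x y hx hy
  rcases eq_or_ne x y with rfl | hxy
  · exact ⟨1, one_mem _, rfl⟩
  by_cases hline : ∀ ℓ ∈ B, ¬(inf ∈ ℓ ∧ x ∈ ℓ ∧ y ∈ ℓ)
  · exact ⟨_, sigma_mem x y, sigma_send hmv hx hy hxy hline⟩
  · push_neg at hline
    obtain ⟨ℓ, hℓ, hinfℓ, hxℓ, hyℓ⟩ := hline
    have hlam : 1 ≤ lam := by
      have hl := hD.2.1 inf x (Ne.symm hx)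
      have hmem : ℓ ∈ B.filter (fun ℓ => inf ∈ ℓ ∧ x ∈ ℓ) :=
        Finset.mem_filter.mpr ⟨hℓ, hinfℓ, hxℓ⟩
      have := Finset.card_pos.mpr ⟨ℓ, hmem⟩
      omega
    have h1 := collin_ncard_le hD (Ne.symm hx)
    have h2 := collin_ncard_le hD (Ne.symm hy)
    have h3 : ({inf, x, y} : Set Ω).ncard ≤ 3 := by
      refine le_trans (Set.ncard_insert_le _ _) ?_
      have h4 := Set.ncard_insert_le x ({y} : Set Ω)
      rw [Set.ncard_singleton] at h4
      omega
    obtain ⟨z, hz⟩ : ∃ z, z ∉ (collin B inf x ∪ collin B inf y ∪ {inf, x, y} : Set Ω) := by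
      by_contra h; push_neg at h
      have hsub : (Set.univ : Set Ω) ⊆
          (collin B inf x ∪ collin B inf y ∪ {inf, x, y} : Set Ω) := fun z _ => h z
      have hle := Set.ncard_le_ncard hsub (Set.toFinite _)
      rw [Set.ncard_univ, Nat.card_eq_fintype_card, hcardn] at hle
      have hu1 := Set.ncard_union_le (collin B inf x ∪ collin B inf y) ({inf, x, y} : Set Ω)
      have hu2 := Set.ncard_union_le (collin B inf x) (collin B inf y)
      omega
    simp only [Set.mem_union, Set.mem_insert_iff, Set.mem_singleton_iff, not_or] at hz
    obtain ⟨⟨hz1, hz2⟩, hz3, hz4, hz5⟩ := hz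
    refine ⟨(mv inf z * mv z y * mv y inf) * (mv inf x * mv x z * mv z inf),
      mul_mem (sigma_mem z y) (sigma_mem x z), ?_⟩
    rw [Equiv.Perm.mul_apply,
      sigma_send hmv hx hz3 (Ne.symm hz4)
        (fun ℓ' hℓ' h => hz1 ⟨hz3, hz4, ℓ', hℓ', h.1, h.2.1, h.2.2⟩),
      sigma_send hmv hz3 hy hz5
        (fun ℓ' hℓ' h => hz2 ⟨hz3, hz5, ℓ', hℓ', h.1, h.2.2, h.2.1⟩)]

lemma translate_eq {Δ : Set Ω}
    (hblock : ∀ g ∈ holeStabilizer mv inf, (⇑g) '' Δ = Δ ∨ Disjoint ((⇑g) '' Δ) Δ)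
    {g h : Equiv.Perm Ω} (hg : g ∈ holeStabilizer mv inf) (hh : h ∈ holeStabilizer mv inf)
    (hne : ((⇑g) '' Δ ∩ (⇑h) '' Δ).Nonempty) : (⇑g) '' Δ = (⇑h) '' Δ := by
  have hk : h⁻¹ * g ∈ holeStabilizer mv inf := mul_mem (inv_mem hh) hg
  have key : (⇑g) '' Δ = (⇑h) '' ((⇑(h⁻¹ * g)) '' Δ) := by
    rw [← Set.image_comp, ← Equiv.Perm.coe_mul, mul_inv_cancel_left]
  rcases hblock _ hk with heq | hdis
  · rw [key, heq]
  · exfalso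
    have hd2 : Disjoint ((⇑h) '' ((⇑(h⁻¹ * g)) '' Δ)) ((⇑h) '' Δ) :=
      (Set.disjoint_image_iff h.injective).mpr hdis
    rw [← key] at hd2
    exact (Set.not_disjoint_iff_nonempty_inter.mpr hne) hd2

lemma prim {lam n : ℕ} (hD : IsSupersimpleDesign B lam)
    (hcardn : Fintype.card Ω = n) (hcard : n > 9 * lam + 1)
    (Δ : Set Ω) (hΔsub : Δ ⊆ {x | x ≠ inf})
    (hblock : ∀ g ∈ holeStabilizer mv inf, (⇑g) '' Δ = Δ ∨ Disjoint ((⇑g) '' Δ) Δ) :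
    Δ.Subsingleton ∨ Δ = {x | x ≠ inf} := by
  by_contra hcon
  push_neg at hcon
  obtain ⟨hns, hne⟩ := hcon
  rw [Set.Nontrivial] at hns
  obtain ⟨u, hu, v, hv, huv⟩ := hns
  have hss : Δ ⊂ {x | x ≠ inf} := ssubset_of_subset_of_ne hΔsub hne
  obtain ⟨t, ht, htΔ⟩ := Set.exists_of_ssubset hss
  have htinf : t ≠ inf := ht
  have huinf : u ≠ inf := hΔsub hu
  have hvinf : v ≠ inf := hΔsub hv
  have hinfΔ : inf ∉ Δ := fun h => (hΔsub h) rfl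
  have hmoved : ∀ g ∈ holeStabilizer mv inf, ∀ y ∈ Δ, g y ≠ inf := by
    intro g hg y hyΔ heq
    have h2 : g inf = inf := hole_fix hmv g hg
    exact (hΔsub hyΔ) (g.injective (heq.trans h2.symm))
  by_cases hcl : ∃ x ∈ Δ, ∃ w ∈ Δ, x ≠ w ∧ ∀ ℓ ∈ B, ¬(inf ∈ ℓ ∧ x ∈ ℓ ∧ w ∈ ℓ)
  · -- main case: a pair in Δ not collinear with inf
    obtain ⟨x, hxΔ, w, hwΔ, hxw, hnoline⟩ := hcl
    have hxinf : x ≠ inf := hΔsub hxΔ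
    have hwinf : w ≠ inf := hΔsub hwΔ
    have cov : (Set.univ : Set Ω) ⊆
        Δ ∪ collin B inf x ∪ collin B x w ∪ collin B inf w ∪ {inf} := by
      intro z _
      by_contra hz
      simp only [Set.mem_union, Set.mem_singleton_iff, not_or] at hz
      obtain ⟨⟨⟨⟨hzΔ, hz1⟩, hz2⟩, hz3⟩, hz4⟩ := hz
      have hzx : z ≠ x := fun h => hzΔ (h ▸ hxΔ)
      have hzw : z ≠ w := fun h => hzΔ (h ▸ hwΔ)
      have hgx : (mv inf x * mv x z * mv z inf) x = z :=
        sigma_send hmv hxinf hz4 (Ne.symm hzx)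
          (fun ℓ hℓ h => hz1 ⟨hz4, hzx, ℓ, hℓ, h.1, h.2.1, h.2.2⟩)
      have hgw : (mv inf x * mv x z * mv z inf) w = w :=
        sigma_fixpt hmv hxinf hz4 (Ne.symm hzx) hnoline
          (fun ℓ hℓ h => hz2 ⟨hzx, hzw, ℓ, hℓ, h.1, h.2.2, h.2.1⟩)
          (fun ℓ hℓ h => hz3 ⟨hz4, hzw, ℓ, hℓ, h.2.1, h.2.2, h.1⟩)
      rcases hblock _ (sigma_mem (mv := mv) (inf := inf) x z) with heq | hdis
      · exact hzΔ (heq ▸ ⟨x, hxΔ, hgx⟩)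
      · exact Set.disjoint_left.mp hdis ⟨w, hwΔ, hgw⟩ hwΔ
    have hc1 := collin_ncard_le hD (Ne.symm hxinf)
    have hc2 := collin_ncard_le hD hxw
    have hc3 := collin_ncard_le hD (Ne.symm hwinf)
    have hcov := Set.ncard_le_ncard cov (Set.toFinite _)
    rw [Set.ncard_univ, Nat.card_eq_fintype_card, hcardn] at hcov
    have u1 := Set.ncard_union_le
      (Δ ∪ collin B inf x ∪ collin B x w ∪ collin B inf w) ({inf} : Set Ω)
    have u2 := Set.ncard_union_le (Δ ∪ collin B inf x ∪ collin B x w) (collin B inf w)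
    have u3 := Set.ncard_union_le (Δ ∪ collin B inf x) (collin B x w)
    have u4 := Set.ncard_union_le Δ (collin B inf x)
    rw [Set.ncard_singleton] at u1
    have hdle : n ≤ Δ.ncard + 6 * lam + 1 := by omega
    -- lam ≥ 1
    have hd2 : Δ.ncard + 2 ≤ n := by
      have hdisj : Disjoint Δ ({t, inf} : Set Ω) := by
        rw [Set.disjoint_right]
        intro a ha
        simp only [Set.mem_insert_iff, Set.mem_singleton_iff] at ha
        rcases ha with rfl | rfl
        · exact htΔ
        · exact hinfΔ
      have he : (Δ ∪ {t, inf}).ncard = Δ.ncard + 2 := by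
        rw [Set.ncard_union_eq hdisj, Set.ncard_pair htinf]
      have hle := Set.ncard_le_ncard (Set.subset_univ (Δ ∪ {t, inf})) (Set.toFinite _)
      rw [Set.ncard_univ, Nat.card_eq_fintype_card, hcardn, he] at hle
      exact hle
    have hlam1 : 1 ≤ lam := by omega
    obtain ⟨g₀, hg₀, hg₀x⟩ := trans_lemma hmv hD hcardn hcard x t hxinf htinf
    set T := (⇑g₀) '' Δ with hTdef
    have htT : t ∈ T := ⟨x, hxΔ, hg₀x⟩
    have hdisT : Disjoint T Δ := by
      rcases hblock g₀ hg₀ with heq | hdis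
      · exact absurd (heq ▸ htT) htΔ
      · exact hdis
    have hTcard : T.ncard = Δ.ncard := Set.ncard_image_of_injective _ g₀.injective
    have hTinf : inf ∉ T := by
      rintro ⟨y, hyΔ, hyeq⟩
      exact hmoved g₀ hg₀ y hyΔ hyeq
    have cov2 : ∀ s : Ω, s ≠ inf → s ∈ Δ ∪ T := by
      intro s hsinf
      by_contra hs
      simp only [Set.mem_union, not_or] at hs
      obtain ⟨hsΔ, hsT⟩ := hs
      obtain ⟨g₂, hg₂, hg₂x⟩ := trans_lemma hmv hD hcardn hcard x s hxinf hsinf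
      set T₂ := (⇑g₂) '' Δ with hT₂def
      have hsT₂ : s ∈ T₂ := ⟨x, hxΔ, hg₂x⟩
      have hdis₂ : Disjoint T₂ Δ := by
        rcases hblock g₂ hg₂ with heq | hdis
        · exact absurd (heq ▸ hsT₂) hsΔ
        · exact hdis
      have hdis₃ : Disjoint T₂ T := by
        by_contra hnd
        rw [Set.not_disjoint_iff_nonempty_inter] at hnd
        have heq3 := translate_eq hmv hblock hg₂ hg₀ hnd
        refine hsT ?_
        rw [hTdef, ← heq3]
        exact hsT₂
      have hT₂card : T₂.ncard = Δ.ncard := Set.ncard_image_of_injective _ g₂.injective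
      have hT₂inf : inf ∉ T₂ := by
        rintro ⟨y, hyΔ, hyeq⟩
        exact hmoved g₂ hg₂ y hyΔ hyeq
      have d1 : Disjoint Δ T := hdisT.symm
      have d2 : Disjoint (Δ ∪ T) T₂ := Set.disjoint_union_left.mpr ⟨hdis₂.symm, hdis₃.symm⟩
      have d3 : Disjoint (Δ ∪ T ∪ T₂) ({inf} : Set Ω) := by
        rw [Set.disjoint_singleton_right]
        simp only [Set.mem_union, not_or]
        exact ⟨⟨hinfΔ, hTinf⟩, hT₂inf⟩
      have e1 : (Δ ∪ T ∪ T₂ ∪ {inf}).ncard = Δ.ncard + T.ncard + T₂.ncard + 1 := by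
        rw [Set.ncard_union_eq d3, Set.ncard_union_eq d2, Set.ncard_union_eq d1,
          Set.ncard_singleton]
      have e2 : (Δ ∪ T ∪ T₂ ∪ {inf}).ncard ≤ n := by
        have hle := Set.ncard_le_ncard (Set.subset_univ (Δ ∪ T ∪ T₂ ∪ {inf})) (Set.toFinite _)
        rwa [Set.ncard_univ, Nat.card_eq_fintype_card, hcardn] at hle
      omega
    have hTnotsub : ¬ T ⊆ collin B inf x := by
      intro hsub
      have := Set.ncard_le_ncard hsub (Set.toFinite _)
      omega
    obtain ⟨t', ht'T, ht'c⟩ := Set.not_subset.mp hTnotsub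
    have ht'inf : t' ≠ inf := fun h => hTinf (h ▸ ht'T)
    have ht'Δ : t' ∉ Δ := fun h => Set.disjoint_left.mp hdisT ht'T h
    have ht'x : t' ≠ x := fun h => ht'Δ (h ▸ hxΔ)
    have hg'mem := sigma_mem (mv := mv) (inf := inf) x t'
    have hg'x : (mv inf x * mv x t' * mv t' inf) x = t' :=
      sigma_send hmv hxinf ht'inf (Ne.symm ht'x)
        (fun ℓ hℓ h => ht'c ⟨ht'inf, ht'x, ℓ, hℓ, h.1, h.2.1, h.2.2⟩)
    set g' := mv inf x * mv x t' * mv t' inf with hg'def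
    have hg'Δ : (⇑g') '' Δ = T :=
      translate_eq hmv hblock hg'mem hg₀ ⟨t', ⟨x, hxΔ, hg'x⟩, ht'T⟩
    have hg'T : (⇑g') '' T = (⇑(g' * g₀)) '' Δ := by
      rw [hTdef, ← Set.image_comp, ← Equiv.Perm.coe_mul]
    have hdisg'T : Disjoint ((⇑g') '' T) T := by
      by_contra hnd
      rw [Set.not_disjoint_iff_nonempty_inter] at hnd
      rw [hg'T] at hnd
      have heq2 : (⇑(g' * g₀)) '' Δ = (⇑g₀) '' Δ :=
        translate_eq hmv hblock (mul_mem hg'mem hg₀) hg₀ hnd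
      have hgTT : (⇑g') '' T = T := by rw [hg'T, heq2]
      have hΔT : Δ = T := by
        have h5 : (⇑g') '' Δ = (⇑g') '' T := hg'Δ.trans hgTT.symm
        exact Set.image_injective.mpr g'.injective h5
      exact Set.disjoint_left.mp hdisT (hΔT ▸ hu) hu
    have hmovedall : ∀ y : Ω, y ≠ inf → g' y ≠ y := by
      intro y hyinf heq
      rcases cov2 y hyinf with hyΔ | hyT
      · have hm : g' y ∈ T := hg'Δ ▸ ⟨y, hyΔ, rfl⟩
        rw [heq] at hm
        exact Set.disjoint_left.mp hdisT hm hyΔ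
      · have hm : g' y ∈ (⇑g') '' T := ⟨y, hyT, rfl⟩
        rw [heq] at hm
        exact Set.disjoint_left.mp hdisg'T hm hyT
    have cov3 : (Set.univ : Set Ω) ⊆
        collin B inf x ∪ collin B x t' ∪ collin B inf t' ∪ {inf, x, t'} := by
      intro y _
      by_contra hy
      simp only [Set.mem_union, Set.mem_insert_iff, Set.mem_singleton_iff, not_or] at hy
      obtain ⟨⟨⟨hy1, hy2⟩, hy3⟩, hy4, hy5, hy6⟩ := hy
      exact hmovedall y hy4 (sigma_fixpt hmv hxinf ht'inf (Ne.symm ht'x)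
        (fun ℓ hℓ h => hy1 ⟨hy4, hy5, ℓ, hℓ, h.1, h.2.1, h.2.2⟩)
        (fun ℓ hℓ h => hy2 ⟨hy5, hy6, ℓ, hℓ, h.1, h.2.1, h.2.2⟩)
        (fun ℓ hℓ h => hy3 ⟨hy4, hy6, ℓ, hℓ, h.2.1, h.1, h.2.2⟩))
    have h4c := Set.ncard_le_ncard cov3 (Set.toFinite _)
    rw [Set.ncard_univ, Nat.card_eq_fintype_card, hcardn] at h4c
    have w1 := Set.ncard_union_le
      (collin B inf x ∪ collin B x t' ∪ collin B inf t') ({inf, x, t'} : Set Ω)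
    have w2 := Set.ncard_union_le (collin B inf x ∪ collin B x t') (collin B inf t')
    have w3 := Set.ncard_union_le (collin B inf x) (collin B x t')
    have w4 : ({inf, x, t'} : Set Ω).ncard ≤ 3 := by
      refine le_trans (Set.ncard_insert_le _ _) ?_
      have h5 := Set.ncard_insert_le x ({t'} : Set Ω)
      rw [Set.ncard_singleton] at h5
      omega
    have hct1 := collin_ncard_le hD (Ne.symm ht'x)
    have hct2 := collin_ncard_le hD (Ne.symm ht'inf)
    omega
  · -- clique case
    push_neg at hcl
    obtain ⟨ℓ, hℓB, hiℓ, huℓ, hvℓ⟩ := hcl u hu v hv huv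
    have hcard4 : ℓ.card = 4 := hD.1 ℓ hℓB
    have hsub3 : ({inf, v, u} : Finset Ω) ⊆ ℓ := by
      intro a ha
      simp only [Finset.mem_insert, Finset.mem_singleton] at ha
      rcases ha with rfl | rfl | rfl <;> assumption
    have hc3 : ({inf, v, u} : Finset Ω).card = 3 := by
      rw [Finset.card_insert_of_notMem, Finset.card_insert_of_notMem, Finset.card_singleton]
      · simp only [Finset.mem_singleton]; exact Ne.symm huv
      · simp only [Finset.mem_insert, Finset.mem_singleton, not_or]
        exact ⟨Ne.symm hvinf, Ne.symm huinf⟩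
    have hsd : (ℓ \ {inf, v, u}).card = 1 := by
      rw [Finset.card_sdiff_of_subset hsub3, hcard4, hc3]
    obtain ⟨p, hp⟩ := Finset.card_eq_one.mp hsd
    have hpmem : p ∈ ℓ \ ({inf, v, u} : Finset Ω) := hp ▸ Finset.mem_singleton_self p
    have hpℓ : p ∈ ℓ := (Finset.mem_sdiff.mp hpmem).1
    have hpnot := (Finset.mem_sdiff.mp hpmem).2
    simp only [Finset.mem_insert, Finset.mem_singleton, not_or] at hpnot
    obtain ⟨hpinf, hpv, hpu⟩ := hpnot
    have hℓeq : ({inf, v, u, p} : Finset Ω) = ℓ := by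
      apply Finset.eq_of_subset_of_card_le
      · intro a ha
        simp only [Finset.mem_insert, Finset.mem_singleton] at ha
        rcases ha with rfl | rfl | rfl | rfl <;> assumption
      · rw [hcard4]
        have hcc : ({inf, v, u, p} : Finset Ω).card = 4 := by
          rw [Finset.card_insert_of_notMem, Finset.card_insert_of_notMem,
            Finset.card_insert_of_notMem, Finset.card_singleton]
          · simp only [Finset.mem_singleton]; exact Ne.symm hpu
          · simp only [Finset.mem_insert, Finset.mem_singleton, not_or]
            exact ⟨Ne.symm huv, Ne.symm hpv⟩
          · simp only [Finset.mem_insert, Finset.mem_singleton, not_or]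
            exact ⟨Ne.symm hvinf, Ne.symm huinf, Ne.symm hpinf⟩
        omega
    have hlineB : ({inf, v, u, p} : Finset Ω) ∈ B := hℓeq ▸ hℓB
    have hlam1 : 1 ≤ lam := by
      have hl := hD.2.1 inf u (Ne.symm huinf)
      have hmem : ℓ ∈ B.filter (fun ℓ' => inf ∈ ℓ' ∧ u ∈ ℓ') :=
        Finset.mem_filter.mpr ⟨hℓB, hiℓ, huℓ⟩
      have := Finset.card_pos.mpr ⟨ℓ, hmem⟩
      omega
    set bad : Set Ω := collin B inf u ∪ collin B inf v ∪ collin B u v with hbaddef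
    have hubad : u ∈ bad :=
      Or.inl (Or.inr ⟨huinf, huv, ℓ, hℓB, hiℓ, hvℓ, huℓ⟩)
    have hvbad : v ∈ bad :=
      Or.inl (Or.inl ⟨hvinf, Ne.symm huv, ℓ, hℓB, hiℓ, huℓ, hvℓ⟩)
    have hinfbad : inf ∈ bad :=
      Or.inr ⟨Ne.symm huinf, Ne.symm hvinf, ℓ, hℓB, huℓ, hvℓ, hiℓ⟩
    have key : ∀ z, z ∉ bad → ∃ g ∈ holeStabilizer mv inf, g v = z ∧ g u = p := by
      intro z hz
      have hzu : z ≠ u := fun h => hz (h ▸ hubad)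
      have hzv : z ≠ v := fun h => hz (h ▸ hvbad)
      have hzinf : z ≠ inf := fun h => hz (h ▸ hinfbad)
      have hz1 : z ∉ collin B inf u := fun h => hz (Or.inl (Or.inl h))
      have hz2 : z ∉ collin B inf v := fun h => hz (Or.inl (Or.inr h))
      have hz3 : z ∉ collin B u v := fun h => hz (Or.inr h)
      refine ⟨mv inf v * mv v z * mv z inf, sigma_mem v z, ?_, ?_⟩
      · exact sigma_send hmv hvinf hzinf (Ne.symm hzv)
          (fun ℓ' hℓ' h => hz2 ⟨hzinf, hzv, ℓ', hℓ', h.1, h.2.1, h.2.2⟩)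
      · obtain ⟨m1, m2, m3, m4⟩ := hmv
        simp only [Equiv.Perm.mul_apply]
        rw [m4 z inf u hzinf
            (fun ℓ' hℓ' h => hz1 ⟨hzinf, hzu, ℓ', hℓ', h.2.1, h.2.2, h.1⟩),
          m4 v z u (Ne.symm hzv)
            (fun ℓ' hℓ' h => hz3 ⟨hzu, hzv, ℓ', hℓ', h.2.2, h.1, h.2.1⟩),
          m3 inf v u p (Ne.symm hvinf) hlineB]
    have hcu := collin_ncard_le hD (Ne.symm huinf)
    have hcv := collin_ncard_le hD (Ne.symm hvinf)
    have hcuv := collin_ncard_le hD huv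
    have b2 := Set.ncard_union_le (collin B inf u ∪ collin B inf v) (collin B u v)
    have b3 := Set.ncard_union_le (collin B inf u) (collin B inf v)
    have hbad6 : bad.ncard ≤ 6 * lam := by
      rw [hbaddef]
      omega
    obtain ⟨z₀, hz₀⟩ : ∃ z, z ∉ bad := by
      by_contra h
      push_neg at h
      have hsub : (Set.univ : Set Ω) ⊆ bad := fun z _ => h z
      have hle := Set.ncard_le_ncard hsub (Set.toFinite _)
      rw [Set.ncard_univ, Nat.card_eq_fintype_card, hcardn] at hle
      omega
    obtain ⟨gz₀, hgz₀, hgv₀, hgu₀⟩ := key z₀ hz₀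
    set T := (⇑gz₀) '' Δ with hTdef
    have hpT : p ∈ T := ⟨u, hu, hgu₀⟩
    have covc : (Set.univ : Set Ω) ⊆ bad ∪ T := by
      intro z _
      by_cases hz : z ∈ bad
      · exact Or.inl hz
      · obtain ⟨g, hg, hgv, hgu⟩ := key z hz
        have heq4 := translate_eq hmv hblock hg hgz₀ ⟨p, ⟨u, hu, hgu⟩, hpT⟩
        refine Or.inr ?_
        rw [hTdef, ← heq4]
        exact ⟨v, hv, hgv⟩
    have hΔsmall : Δ ⊆ insert u (collin B inf u) := by
      intro w hw
      rcases eq_or_ne w u with rfl | hwu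
      · exact Set.mem_insert _ _
      · obtain ⟨ℓ', hℓ', hi', hu', hw'⟩ := hcl u hu w hw (Ne.symm hwu)
        exact Set.mem_insert_of_mem _ ⟨hΔsub hw, hwu, ℓ', hℓ', hi', hu', hw'⟩
    have hΔc : Δ.ncard ≤ 2 * lam + 1 := by
      have h5 := Set.ncard_le_ncard hΔsmall (Set.toFinite _)
      have h6 := Set.ncard_insert_le u (collin B inf u)
      omega
    have hTc : T.ncard = Δ.ncard := Set.ncard_image_of_injective _ gz₀.injective
    have hfin := Set.ncard_le_ncard covc (Set.toFinite _)
    rw [Set.ncard_univ, Nat.card_eq_fintype_card, hcardn] at hfin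
    have b1 := Set.ncard_union_le bad T
    omega

end Moves

end Stmt17Aux

theorem stmt_17 {Ω : Type*} [Fintype Ω] [DecidableEq Ω]
    (n lam : ℕ) (hn : Fintype.card Ω = n)
    (B : Finset (Finset Ω)) (hD : IsSupersimpleDesign B lam)
    (mv : Ω → Ω → Equiv.Perm Ω) (hmv : IsElementaryMove B mv)
    (inf : Ω)
    (hcard : n > 9 * lam + 1) :
    (∀ g ∈ holeStabilizer mv inf, g inf = inf) ∧
    (∀ x y : Ω, x ≠ inf → y ≠ inf → ∃ g ∈ holeStabilizer mv inf, g x = y) ∧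
    (∀ Δ : Set Ω, Δ ⊆ {x | x ≠ inf} →
        (∀ g ∈ holeStabilizer mv inf, (⇑g) '' Δ = Δ ∨ Disjoint ((⇑g) '' Δ) Δ) →
        Δ.Subsingleton ∨ Δ = {x | x ≠ inf}) := by
  exact ⟨Stmt17Aux.hole_fix hmv,
    Stmt17Aux.trans_lemma hmv hD hn hcard,
    fun Δ hsub hblock => Stmt17Aux.prim hmv hD hn hcard Δ hsub hblock⟩
end
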